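/- arXiv:2403.03912 — 4 statements merged into one kernel-verified Lean document; each statement's English description precedes it below -/
import Mathlib

section
/- Let b ≥ 2 be an integer and E a nonempty set of base-b digits. For each a ∈ E1 set s_{b,E}(a) = (1/b)·∫_{[0,1)} (ψ((a+x)/b) − ψ(1)) dμ_{b,E}(x). Then for every a ∈ E1 one has (ψ(a/b) − ψ(1))/#E ≤ s_{b,E}(a) < (ψ((a+1)/b) − ψ(1))/#E, and the lower bound is an equality if and only if E contains all the positive digits 1, …, b−1. -/
open MeasureTheory Real ENNReal

/-- The digamma function `ψ(x) = d/dx log Γ(x)`. -/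
noncomputable def digamma (x : ℝ) : ℝ := deriv (fun y => Real.log (Real.Gamma y)) x

/-- The Kempner sum `K(b,E)`: sum of reciprocals of positive integers whose
base-`b` digits all avoid the excluded set `E`. -/
noncomputable def kempnerSum (b : ℕ) (E : Finset ℕ) : ℝ :=
  ∑' n : ℕ, if n ≠ 0 ∧ ∀ d ∈ Nat.digits b n, d ∉ E then (n : ℝ)⁻¹ else 0

/-- The measure `μ_{b,E}` on `[0,1)`: the sum, over all finite strings of admissible
digits (digits `< b` not in `E`), of the weighted Dirac mass `b^{-l} δ_{n(X)/b^l}`. -/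
noncomputable def kempnerMeasure (b : ℕ) (E : Finset ℕ) : Measure ℝ :=
  Measure.sum (fun X : {l : List ℕ // ∀ d ∈ l, d < b ∧ d ∉ E} =>
    ((b : ℝ≥0∞) ^ X.1.length)⁻¹ •
      Measure.dirac (((Nat.ofDigits b X.1 : ℕ) : ℝ) / (b : ℝ) ^ X.1.length))

/-- `E₁ = E` if `0 ∉ E`, and `E₁ = (E ∪ {b}) \ {0}` if `0 ∈ E`. -/
def Eone (b : ℕ) (E : Finset ℕ) : Finset ℕ :=
  if 0 ∈ E then insert b (E.erase 0) else E

/-- `ζ(s) = ∑_{k ≥ 1} k⁻ˢ`. -/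
noncomputable def zetaVal (s : ℕ) : ℝ := ∑' k : ℕ, (((k : ℝ) + 1) ^ s)⁻¹

/-- `v_m(d) = ∫_{[0,1)} (d - x)^m dμ_{b,E}(x)`. -/
noncomputable def vMoment (b : ℕ) (E : Finset ℕ) (m : ℕ) (d : ℝ) : ℝ :=
  ∫ x in Set.Ico (0 : ℝ) 1, (d - x) ^ m ∂(kempnerMeasure b E)

/-- `s_{b,E}(a)`, the contribution of digit `a` in the digamma formula. -/
noncomputable def sBE (b : ℕ) (E : Finset ℕ) (a : ℕ) : ℝ :=
  (1 / (b : ℝ)) * ∫ x in Set.Ico (0 : ℝ) 1,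
    (digamma (((a : ℝ) + x) / b) - digamma 1) ∂(kempnerMeasure b E)

/-! ### Auxiliary lemmas about the digamma function -/


lemma digamma_diff {x : ℝ} (hx : 0 < x) :
    DifferentiableAt ℝ (Real.log ∘ Real.Gamma) x := by
  have h1 : DifferentiableAt ℝ Real.Gamma x :=
    Real.differentiableAt_Gamma (fun m => by
      have h : (0:ℝ) ≤ (m:ℝ) := Nat.cast_nonneg m
      intro he; rw [he] at hx; linarith)
  exact h1.log (Real.Gamma_pos_of_pos hx).ne'

lemma digamma_eq_deriv_comp (x : ℝ) : digamma x = deriv (Real.log ∘ Real.Gamma) x := rfl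

lemma digamma_le_slope {x y : ℝ} (hx : 0 < x) (hxy : x < y) :
    digamma x ≤ slope (Real.log ∘ Real.Gamma) x y :=
  Real.convexOn_log_Gamma.deriv_le_slope hx (lt_trans hx hxy) hxy (digamma_diff hx)

lemma slope_le_digamma {x y : ℝ} (hx : 0 < x) (hxy : x < y) :
    slope (Real.log ∘ Real.Gamma) x y ≤ digamma y :=
  Real.convexOn_log_Gamma.slope_le_deriv hx (lt_trans hx hxy) hxy (digamma_diff (lt_trans hx hxy))

lemma digamma_mono {x y : ℝ} (hx : 0 < x) (hxy : x ≤ y) : digamma x ≤ digamma y := by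
  rcases eq_or_lt_of_le hxy with rfl | h
  · rfl
  · exact (digamma_le_slope hx h).trans (slope_le_digamma hx h)

lemma digamma_strictMono {x y : ℝ} (hx : 0 < x) (hxy : x < y) : digamma x < digamma y := by
  by_contra hcon
  push_neg at hcon
  set f := Real.log ∘ Real.Gamma with hf
  have hy : 0 < y := lt_trans hx hxy
  have hc : ∀ z ∈ Set.Icc x y, digamma z = digamma x := fun z hz =>
    le_antisymm (le_trans (digamma_mono (lt_of_lt_of_le hx hz.1) hz.2) hcon)
      (digamma_mono hx hz.1)
  have hslope : ∀ z ∈ Set.Ioc x y, f z = f x + digamma x * (z - x) := by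
    intro z hz
    have h1 : digamma x ≤ slope f x z := digamma_le_slope hx hz.1
    have h2 : slope f x z ≤ digamma z := slope_le_digamma hx hz.1
    have h3 : slope f x z = digamma x :=
      le_antisymm (by rw [← hc z ⟨le_of_lt hz.1, hz.2⟩]; exact h2) h1
    have hzx : z - x ≠ 0 := sub_ne_zero.2 (ne_of_gt hz.1)
    rw [slope_def_field, div_eq_iff hzx] at h3
    linarith
  set m := (x + y) / 2 with hm
  have hmx : m ∈ Set.Ioc x y := ⟨by simp only [hm]; linarith, by simp only [hm]; linarith⟩
  have hm0 : 0 < m := lt_trans hx hmx.1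
  have hshift : ∀ t : ℝ, 0 < t → f (t + 1) = Real.log t + f t := by
    intro t ht
    simp only [hf, Function.comp_apply]
    rw [Real.Gamma_add_one (ne_of_gt ht), Real.log_mul (ne_of_gt ht)
      (Real.Gamma_pos_of_pos ht).ne']
  have hconv := Real.convexOn_log_Gamma.2 (Set.mem_Ioi.2 (by linarith : (0:ℝ) < x + 1))
    (Set.mem_Ioi.2 (by linarith : (0:ℝ) < y + 1)) (by norm_num : (0:ℝ) ≤ 1/2)
    (by norm_num : (0:ℝ) ≤ 1/2) (by norm_num)
  have harg : (1/2 : ℝ) • (x + 1) + (1/2 : ℝ) • (y + 1) = m + 1 := by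
    simp only [smul_eq_mul, hm]; ring
  rw [harg] at hconv
  simp only [smul_eq_mul, ← hf] at hconv
  have hlog := strictConcaveOn_log_Ioi.2 (Set.mem_Ioi.2 hx) (Set.mem_Ioi.2 hy)
    (ne_of_lt hxy) (by norm_num : (0:ℝ) < 1/2) (by norm_num : (0:ℝ) < 1/2) (by norm_num)
  simp only [smul_eq_mul] at hlog
  have harg2 : (1/2 : ℝ) * x + (1/2 : ℝ) * y = m := by simp only [hm]; ring
  rw [harg2] at hlog
  have e1 := hshift x hx
  have e2 := hshift y hy
  have e3 := hshift m hm0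
  have e4 := hslope m hmx
  have e5 := hslope y ⟨hxy, le_refl y⟩
  rw [e1, e2, e3, e4, e5] at hconv
  have : m - x = (y - x)/2 := by simp only [hm]; ring
  rw [this] at hconv
  nlinarith [hconv, hlog]

/-! ### Auxiliary lemmas about the Kempner measure -/

abbrev AdmStr (b : ℕ) (E : Finset ℕ) := {l : List ℕ // ∀ d ∈ l, d < b ∧ d ∉ E}

noncomputable def kpt (b : ℕ) (l : List ℕ) : ℝ :=
  ((Nat.ofDigits b l : ℕ) : ℝ) / (b : ℝ) ^ l.length

lemma kpt_mem_Ico {b : ℕ} (hb : 2 ≤ b) {l : List ℕ} (hl : ∀ d ∈ l, d < b) :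
    kpt b l ∈ Set.Ico (0:ℝ) 1 := by
  have hbp : (0:ℝ) < (b:ℝ) ^ l.length := by positivity
  constructor
  · exact div_nonneg (Nat.cast_nonneg _) hbp.le
  · rw [kpt, div_lt_one hbp]
    have := Nat.ofDigits_lt_base_pow_length (by omega : 1 < b) hl
    exact_mod_cast this

lemma kempner_apply {b : ℕ} {E : Finset ℕ} {s : Set ℝ} (hs : MeasurableSet s) :
    kempnerMeasure b E s
      = ∑' X : AdmStr b E, ((b : ℝ≥0∞) ^ X.1.length)⁻¹ * Measure.dirac (kpt b X.1) s := by
  rw [kempnerMeasure, Measure.sum_apply _ hs]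
  exact tsum_congr fun X => by rw [Measure.smul_apply, smul_eq_mul]; rfl

lemma tsum_weights {b : ℕ} {E : Finset ℕ} (hb : 2 ≤ b) (hE : E.Nonempty)
    (hEsub : ∀ d ∈ E, d < b) :
    ∑' X : AdmStr b E, ((b : ℝ≥0∞) ^ X.1.length)⁻¹ = (b : ℝ≥0∞) / E.card := by
  classical
  haveI : Fintype {d : ℕ // d < b ∧ d ∉ E} :=
    Fintype.subtype (Finset.range b \ E)
      (fun x => by rw [Finset.mem_sdiff, Finset.mem_range])
  set α := {d : ℕ // d < b ∧ d ∉ E} with hα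
  have hEb : E ⊆ Finset.range b := fun d hd => Finset.mem_range.2 (hEsub d hd)
  have hcard : Fintype.card α = b - E.card := by
    rw [Fintype.card_of_subtype (Finset.range b \ E)
      (fun x => by rw [Finset.mem_sdiff, Finset.mem_range])]
    rw [Finset.card_sdiff_of_subset hEb, Finset.card_range]
  let e1 : AdmStr b E ≃ List α :=
    { toFun := fun X => X.1.attachWith _ X.2
      invFun := fun L => ⟨L.unattach, fun d hd => by
        obtain ⟨⟨d', hd'⟩, -, rfl⟩ := List.mem_map.1 hd
        exact hd'⟩
      left_inv := fun X => Subtype.ext List.unattach_attachWith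
      right_inv := fun L =>
        (List.map_injective_iff.2 Subtype.val_injective) List.unattach_attachWith }
  have hlen : ∀ X : AdmStr b E, (e1 X).length = X.1.length := fun X =>
    List.length_attachWith
  have h1 : ∑' X : AdmStr b E, ((b : ℝ≥0∞) ^ X.1.length)⁻¹
      = ∑' L : List α, ((b : ℝ≥0∞) ^ L.length)⁻¹ := by
    rw [← Equiv.tsum_eq e1 (fun L : List α => ((b : ℝ≥0∞) ^ L.length)⁻¹)]
    exact tsum_congr fun X => by rw [hlen]
  have h3 := Equiv.tsum_eq (List.equivSigmaTuple (α := α))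
    (fun p : Σ n, Fin n → α => ((b : ℝ≥0∞) ^ p.1)⁻¹)
  have h4 : ∑' L : List α, ((b : ℝ≥0∞) ^ L.length)⁻¹
      = ∑' p : Σ n, Fin n → α, ((b : ℝ≥0∞) ^ p.1)⁻¹ := by
    rw [← h3]; exact tsum_congr fun L => rfl
  have h5 : ∑' p : Σ n, Fin n → α, ((b : ℝ≥0∞) ^ p.1)⁻¹
      = ∑' n : ℕ, ∑' _t : Fin n → α, ((b : ℝ≥0∞) ^ n)⁻¹ :=
    ENNReal.tsum_sigma (fun n (_t : Fin n → α) => ((b : ℝ≥0∞) ^ n)⁻¹)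
  rw [h1, h4, h5]
  have h2 : ∀ n : ℕ, ∑' _t : Fin n → α, ((b : ℝ≥0∞) ^ n)⁻¹
      = (((Fintype.card α : ℝ≥0∞)) * ((b : ℝ≥0∞))⁻¹) ^ n := by
    intro n
    rw [tsum_fintype, Finset.sum_const, Finset.card_univ]
    rw [nsmul_eq_mul, mul_pow, ENNReal.inv_pow]
    congr 1
    rw [Fintype.card_pi]
    push_cast
    simp [Finset.prod_const]
  simp only [h2]
  rw [ENNReal.tsum_geometric]
  -- now arithmetic
  set k := E.card with hk
  have hk1 : 1 ≤ k := Finset.card_pos.2 hE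
  have hkb : k ≤ b := le_trans (Finset.card_le_card hEb) (by simp)
  have hbne : (b : ℝ≥0∞) ≠ 0 := by exact_mod_cast (by omega : b ≠ 0)
  have hbnetop : (b : ℝ≥0∞) ≠ ⊤ := natCast_ne_top b
  have hkcast : ((b - k : ℕ) : ℝ≥0∞) = (b : ℝ≥0∞) - (k : ℝ≥0∞) :=
    ENNReal.natCast_sub b k
  rw [hcard, hkcast]
  have hkle : (k : ℝ≥0∞) ≤ (b : ℝ≥0∞) := by exact_mod_cast hkb
  have hsub : (1 : ℝ≥0∞) - ((b : ℝ≥0∞) - k) * (b : ℝ≥0∞)⁻¹ = (k : ℝ≥0∞) * (b : ℝ≥0∞)⁻¹ := by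
    have hadd : ((b : ℝ≥0∞) - k) * (b : ℝ≥0∞)⁻¹ + (k : ℝ≥0∞) * (b : ℝ≥0∞)⁻¹ = 1 := by
      rw [← add_mul, tsub_add_cancel_of_le hkle, ENNReal.mul_inv_cancel hbne hbnetop]
    have hfin : ((b : ℝ≥0∞) - k) * (b : ℝ≥0∞)⁻¹ ≠ ⊤ :=
      ENNReal.mul_ne_top (by exact ne_top_of_le_ne_top hbnetop (tsub_le_self))
        (ENNReal.inv_ne_top.2 hbne)
    exact ENNReal.sub_eq_of_eq_add hfin (by rw [← hadd]; ring)
  rw [hsub, ENNReal.mul_inv (Or.inr (ENNReal.inv_ne_top.2 hbne))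
    (Or.inl (natCast_ne_top k)), inv_inv]
  rw [ENNReal.div_eq_inv_mul]

lemma kempner_apply_superset {b : ℕ} {E : Finset ℕ} (hb : 2 ≤ b) {s : Set ℝ}
    (hs : MeasurableSet s) (hsub : Set.Ico (0:ℝ) 1 ⊆ s) :
    kempnerMeasure b E s = ∑' X : AdmStr b E, ((b : ℝ≥0∞) ^ X.1.length)⁻¹ := by
  rw [kempner_apply hs]
  exact tsum_congr fun X => by
    rw [Measure.dirac_apply_of_mem
      (hsub (kpt_mem_Ico hb (fun d hd => (X.2 d hd).1))), mul_one]

lemma kempner_Ico {b : ℕ} {E : Finset ℕ} (hb : 2 ≤ b) (hE : E.Nonempty)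
    (hEsub : ∀ d ∈ E, d < b) :
    kempnerMeasure b E (Set.Ico (0:ℝ) 1) = (b : ℝ≥0∞) / E.card := by
  rw [kempner_apply_superset hb measurableSet_Ico subset_rfl, tsum_weights hb hE hEsub]

lemma kempner_univ {b : ℕ} {E : Finset ℕ} (hb : 2 ≤ b) (hE : E.Nonempty)
    (hEsub : ∀ d ∈ E, d < b) :
    kempnerMeasure b E Set.univ = (b : ℝ≥0∞) / E.card := by
  rw [kempner_apply_superset hb MeasurableSet.univ (Set.subset_univ _),
    tsum_weights hb hE hEsub]

lemma kempner_singleton_ge {b : ℕ} {E : Finset ℕ} (X : AdmStr b E) :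
    ((b : ℝ≥0∞) ^ X.1.length)⁻¹ ≤ kempnerMeasure b E {kpt b X.1} := by
  rw [kempner_apply (measurableSet_singleton _)]
  have h := ENNReal.le_tsum (f := fun Y : AdmStr b E =>
    ((b : ℝ≥0∞) ^ Y.1.length)⁻¹ * Measure.dirac (kpt b Y.1) {kpt b X.1}) X
  rwa [Measure.dirac_apply_of_mem (Set.mem_singleton _), mul_one] at h

lemma ofDigits_eq_zero_of_all_zero {b : ℕ} : ∀ {l : List ℕ}, (∀ d ∈ l, d = 0) →
    Nat.ofDigits b l = 0
  | [], _ => by simp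
  | d :: l, h => by
    rw [Nat.ofDigits_cons, h d List.mem_cons_self,
      ofDigits_eq_zero_of_all_zero (fun d' hd' => h d' (List.mem_cons_of_mem d hd'))]
    simp

lemma kempner_null_of_all_pos {b : ℕ} {E : Finset ℕ}
    (hall : ∀ d : ℕ, 0 < d → d < b → d ∈ E) {s : Set ℝ} (hs : MeasurableSet s)
    (h0 : (0:ℝ) ∉ s) : kempnerMeasure b E s = 0 := by
  rw [kempner_apply hs]
  have hz : ∀ X : AdmStr b E, kpt b X.1 = 0 := by
    intro X
    have : ∀ d ∈ X.1, d = 0 := by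
      intro d hd
      rcases X.2 d hd with ⟨hdb, hdE⟩
      by_contra hne
      exact hdE (hall d (Nat.pos_of_ne_zero hne) hdb)
    simp [kpt, ofDigits_eq_zero_of_all_zero this]
  have hzero : ∀ X : AdmStr b E,
      ((b : ℝ≥0∞) ^ X.1.length)⁻¹ * Measure.dirac (kpt b X.1) s = 0 := by
    intro X
    rw [hz X, Measure.dirac_apply' _ hs, Set.indicator_of_notMem h0, mul_zero]
  rw [tsum_congr hzero, tsum_zero]

set_option maxHeartbeats 1000000 in
theorem digamma_bounds_per_digit (b : ℕ) (hb : 2 ≤ b) (E : Finset ℕ)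
    (hE : E.Nonempty) (hEsub : ∀ d ∈ E, d < b) :
    ∀ a ∈ Eone b E,
      (digamma ((a : ℝ) / b) - digamma 1) / E.card ≤ sBE b E a ∧
      sBE b E a < (digamma (((a : ℝ) + 1) / b) - digamma 1) / E.card ∧
      ((digamma ((a : ℝ) / b) - digamma 1) / E.card = sBE b E a ↔
        ∀ d : ℕ, 0 < d → d < b → d ∈ E) := by
  intro a ha
  classical
  have ha1 : 1 ≤ a := by
    rw [Eone] at ha
    by_cases h0 : 0 ∈ E
    · rw [if_pos h0] at ha
      rcases Finset.mem_insert.1 ha with rfl | h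
      · omega
      · have := Finset.mem_erase.1 h
        omega
    · rw [if_neg h0] at ha
      rcases Nat.eq_zero_or_pos a with rfl | h
      · exact absurd ha h0
      · omega
  set μ := kempnerMeasure b E with hμ
  have hbr : (0:ℝ) < (b:ℝ) := by positivity
  have har1 : (1:ℝ) ≤ (a:ℝ) := by exact_mod_cast ha1
  set k := E.card with hk
  have hk0 : 0 < k := Finset.card_pos.2 hE
  have hkr : (0:ℝ) < (k:ℝ) := by positivity
  have hkne : (k : ℝ≥0∞) ≠ 0 := by exact_mod_cast hk0.ne'
  haveI hfin : IsFiniteMeasure μ := by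
    constructor
    rw [hμ, kempner_univ hb hE hEsub]
    exact ENNReal.div_lt_top (natCast_ne_top b) hkne
  set g : ℝ → ℝ := fun x => digamma (((a:ℝ) + x) / b) - digamma 1 with hg
  set c0 : ℝ := digamma ((a:ℝ) / b) - digamma 1 with hc0
  set c1 : ℝ := digamma (((a:ℝ) + 1) / b) - digamma 1 with hc1
  have har : (0:ℝ) < (a:ℝ) / b := by positivity
  have hbound : ∀ x ∈ Set.Ico (0:ℝ) 1, c0 ≤ g x ∧ g x < c1 := by
    intro x hx
    have hx0 : (0:ℝ) ≤ x := hx.1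
    have hx1 : x < 1 := hx.2
    constructor
    · apply sub_le_sub_right
      apply digamma_mono har
      gcongr <;> linarith
    · apply sub_lt_sub_right
      apply digamma_strictMono (by positivity)
      gcongr <;> linarith
  have hdig : Measurable digamma := measurable_deriv _
  have hgm : Measurable g := by
    apply Measurable.sub _ measurable_const
    exact hdig.comp ((measurable_const.add measurable_id).div_const _)
  have hMass : (μ (Set.Ico (0:ℝ) 1)).toReal = (b:ℝ) / (k:ℝ) := by
    rw [hμ, kempner_Ico hb hE hEsub, ENNReal.toReal_div]
    simp
    rfl
  have hconst : ∀ c : ℝ, ∫ _x in Set.Ico (0:ℝ) 1, c ∂μ = c * ((b:ℝ)/(k:ℝ)) := by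
    intro c
    rw [setIntegral_const, measureReal_def, hMass, smul_eq_mul, mul_comm]
  have hgi : IntegrableOn g (Set.Ico (0:ℝ) 1) μ := by
    refine Integrable.mono' (integrable_const (|c0| ⊔ |c1|)) hgm.aestronglyMeasurable ?_
    filter_upwards [ae_restrict_mem measurableSet_Ico] with x hx
    rcases hbound x hx with ⟨h1, h2⟩
    have A : -(|c0| ⊔ |c1|) ≤ c0 := by
      have h3 := neg_abs_le c0
      have h4 : |c0| ≤ |c0| ⊔ |c1| := le_sup_left
      linarith
    have B : c1 ≤ |c0| ⊔ |c1| := le_trans (le_abs_self c1) le_sup_right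
    rw [Real.norm_eq_abs, abs_le]
    constructor <;> linarith
  have hci : ∀ c : ℝ, IntegrableOn (fun _ => c) (Set.Ico (0:ℝ) 1) μ :=
    fun c => integrableOn_const (measure_ne_top _ _)
  have hsbe : sBE b E a = (1 / (b:ℝ)) * ∫ x in Set.Ico (0:ℝ) 1, g x ∂μ := rfl
  -- lower bound
  have hlow : c0 * ((b:ℝ)/(k:ℝ)) ≤ ∫ x in Set.Ico (0:ℝ) 1, g x ∂μ := by
    have hnn : 0 ≤ ∫ x in Set.Ico (0:ℝ) 1, (g x - c0) ∂μ :=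
      setIntegral_nonneg measurableSet_Ico (fun x hx => sub_nonneg.2 (hbound x hx).1)
    have hsplit : ∫ x in Set.Ico (0:ℝ) 1, (g x - c0) ∂μ
        = (∫ x in Set.Ico (0:ℝ) 1, g x ∂μ) - c0 * ((b:ℝ)/(k:ℝ)) := by
      rw [integral_sub hgi (hci c0), hconst c0]
    linarith
  -- strict upper bound
  have hup : (∫ x in Set.Ico (0:ℝ) 1, g x ∂μ) < c1 * ((b:ℝ)/(k:ℝ)) := by
    set f := fun x : ℝ => c1 - g x with hf
    have hfi : IntegrableOn f (Set.Ico (0:ℝ) 1) μ := (hci c1).sub hgi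
    have hf0 : 0 ≤ᵐ[μ.restrict (Set.Ico (0:ℝ) 1)] f := by
      filter_upwards [ae_restrict_mem measurableSet_Ico] with x hx
      exact sub_nonneg.2 (hbound x hx).2.le
    have hmem : (0:ℝ) ∈ Set.Ico (0:ℝ) 1 := ⟨le_refl _, one_pos⟩
    have hsub : ({(0:ℝ)} : Set ℝ) ≤ᵐ[μ] Set.Ico (0:ℝ) 1 :=
      HasSubset.Subset.eventuallyLE (Set.singleton_subset_iff.2 hmem)
    have hmono := setIntegral_mono_set hfi hf0 hsub
    have hsing : ∫ x in ({(0:ℝ)} : Set ℝ), f x ∂μ = (μ {(0:ℝ)}).toReal * f 0 := by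
      rw [Measure.restrict_singleton, integral_smul_measure, integral_dirac, smul_eq_mul]
    have hatom : (1:ℝ≥0∞) ≤ μ {(0:ℝ)} := by
      have h := kempner_singleton_ge (b := b) (E := E)
        ⟨[], fun d hd => absurd hd List.not_mem_nil⟩
      simpa [kpt, ← hμ] using h
    have htor : (1:ℝ) ≤ (μ {(0:ℝ)}).toReal := by
      rw [← ENNReal.toReal_one]
      exact ENNReal.toReal_mono (measure_ne_top μ _) hatom
    have hf0pos : 0 < f 0 := by
      have hlt : digamma ((a:ℝ)/b) < digamma (((a:ℝ)+1)/b) :=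
        digamma_strictMono har (by gcongr <;> linarith)
      simp only [hf, hg, hc1, add_zero]
      linarith
    have hfpos : 0 < ∫ x in Set.Ico (0:ℝ) 1, f x ∂μ := by
      have : f 0 * 1 ≤ (μ {(0:ℝ)}).toReal * f 0 := by nlinarith
      nlinarith [hmono, hsing]
    have hsplit : ∫ x in Set.Ico (0:ℝ) 1, f x ∂μ
        = c1 * ((b:ℝ)/(k:ℝ)) - ∫ x in Set.Ico (0:ℝ) 1, g x ∂μ := by
      rw [hf]
      rw [integral_sub (hci c1) hgi, hconst c1]
    linarith
  refine ⟨?_, ?_, ?_⟩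
  · rw [hsbe]
    have h1 := mul_le_mul_of_nonneg_left hlow (by positivity : (0:ℝ) ≤ 1/(b:ℝ))
    have heq : (1/(b:ℝ)) * (c0 * ((b:ℝ)/(k:ℝ))) = c0 / (k:ℝ) := by
      field_simp
    rw [heq] at h1
    exact h1
  · rw [hsbe]
    have h1 := mul_lt_mul_of_pos_left hup (by positivity : (0:ℝ) < 1/(b:ℝ))
    have heq : (1/(b:ℝ)) * (c1 * ((b:ℝ)/(k:ℝ))) = c1 / (k:ℝ) := by
      field_simp
    rw [heq] at h1
    exact h1
  · constructor
    · -- equality implies all positive digits excluded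
      intro heq
      by_contra hnot
      push_neg at hnot
      obtain ⟨d, hd0, hdb, hdE⟩ := hnot
      have hdr : (0:ℝ) < (d:ℝ) := by exact_mod_cast hd0
      set p : ℝ := (d:ℝ) / (b:ℝ) with hp
      have hppos : 0 < p := by positivity
      have hpmem : p ∈ Set.Ico (0:ℝ) 1 := by
        refine ⟨by positivity, ?_⟩
        rw [hp, div_lt_one hbr]
        exact_mod_cast hdb
      set f2 := fun x : ℝ => g x - c0 with hf2
      have hf2i : IntegrableOn f2 (Set.Ico (0:ℝ) 1) μ := hgi.sub (hci c0)
      have hf20 : 0 ≤ᵐ[μ.restrict (Set.Ico (0:ℝ) 1)] f2 := by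
        filter_upwards [ae_restrict_mem measurableSet_Ico] with x hx
        exact sub_nonneg.2 (hbound x hx).1
      have hsub : ({p} : Set ℝ) ≤ᵐ[μ] Set.Ico (0:ℝ) 1 :=
        HasSubset.Subset.eventuallyLE (Set.singleton_subset_iff.2 hpmem)
      have hmono := setIntegral_mono_set hf2i hf20 hsub
      have hsing : ∫ x in ({p} : Set ℝ), f2 x ∂μ = (μ {p}).toReal * f2 p := by
        rw [Measure.restrict_singleton, integral_smul_measure, integral_dirac, smul_eq_mul]
      have hatom : ((b:ℝ≥0∞))⁻¹ ≤ μ {p} := by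
        have hX : ∀ d' ∈ [d], d' < b ∧ d' ∉ E := by
          intro d' hd'
          rw [List.mem_singleton] at hd'
          subst hd'
          exact ⟨hdb, hdE⟩
        have h := kempner_singleton_ge (b := b) (E := E) ⟨[d], hX⟩
        simpa [kpt, Nat.ofDigits_singleton, hp, ← hμ] using h
      have htor : 0 < (μ {p}).toReal := by
        refine ENNReal.toReal_pos ?_ (measure_ne_top μ _)
        intro h0
        rw [h0] at hatom
        exact (ENNReal.inv_pos.2 (natCast_ne_top b)).not_ge hatom
      have hf2pos : 0 < f2 p := by
        have hlt : digamma ((a:ℝ)/b) < digamma (((a:ℝ) + p)/b) :=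
          digamma_strictMono har (by gcongr <;> linarith)
        simp only [hf2, hg, hc0]
        linarith
      have hfpos : 0 < ∫ x in Set.Ico (0:ℝ) 1, f2 x ∂μ := by
        nlinarith [hmono, hsing]
      have hsplit : ∫ x in Set.Ico (0:ℝ) 1, f2 x ∂μ
          = (∫ x in Set.Ico (0:ℝ) 1, g x ∂μ) - c0 * ((b:ℝ)/(k:ℝ)) := by
        rw [hf2, integral_sub hgi (hci c0), hconst c0]
      have hIgt : c0 * ((b:ℝ)/(k:ℝ)) < ∫ x in Set.Ico (0:ℝ) 1, g x ∂μ := by linarith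
      have h1 := mul_lt_mul_of_pos_left hIgt (by positivity : (0:ℝ) < 1/(b:ℝ))
      have heq2 : (1/(b:ℝ)) * (c0 * ((b:ℝ)/(k:ℝ))) = c0 / (k:ℝ) := by field_simp
      rw [heq2] at h1
      rw [hsbe] at heq
      linarith
    · -- all positive digits excluded implies equality
      intro hall
      have hg0 : g 0 = c0 := by simp only [hg, hc0, add_zero]
      have hnull : μ.restrict (Set.Ico (0:ℝ) 1) {x | g x ≠ c0} = 0 := by
        apply measure_mono_null (t := ({(0:ℝ)}ᶜ : Set ℝ))
        · intro x hx
          simp only [Set.mem_compl_iff, Set.mem_singleton_iff]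
          intro h0
          exact hx (h0 ▸ hg0)
        · rw [Measure.restrict_apply (measurableSet_singleton (0:ℝ)).compl]
          exact kempner_null_of_all_pos hall
            ((measurableSet_singleton (0:ℝ)).compl.inter measurableSet_Ico) (by simp)
      have hae : g =ᵐ[μ.restrict (Set.Ico (0:ℝ) 1)] fun _ => c0 := by
        rw [Filter.EventuallyEq, ae_iff]
        exact hnull
      have hI : ∫ x in Set.Ico (0:ℝ) 1, g x ∂μ = c0 * ((b:ℝ)/(k:ℝ)) := by
        rw [integral_congr_ae hae, hconst c0]
      rw [hsbe, hI]
      field_simp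
end

section
/- Let b ≥ 2 be an integer and E a nonempty set of base-b digits. Suppose a ∈ E is a positive digit with a < b−1 and a+1 ∉ E, and let E' = (E \ {a}) ∪ {a+1}. Then K(b,E) < K(b,E'). -/
open MeasureTheory Real ENNReal

namespace KempnerAux

open Function Finset

lemma ofDigits_map_le (b : ℕ) (g : ℕ → ℕ) (L : List ℕ) (hg : ∀ d ∈ L, g d ≤ d) :
    Nat.ofDigits b (L.map g) ≤ Nat.ofDigits b L := by
  induction L with
  | nil => simp
  | cons d L ih =>
    simp only [List.map_cons, Nat.ofDigits_cons]
    exact Nat.add_le_add (hg d List.mem_cons_self)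
      (Nat.mul_le_mul_left _ (ih fun x hx => hg x (List.mem_cons_of_mem _ hx)))

lemma digits_ofDigits_map (b : ℕ) (hb : 2 ≤ b) (g : ℕ → ℕ) (n : ℕ) (hn : n ≠ 0)
    (hglt : ∀ d ∈ Nat.digits b n, g d < b) (hg0 : ∀ d ∈ Nat.digits b n, d ≠ 0 → g d ≠ 0) :
    Nat.digits b (Nat.ofDigits b ((Nat.digits b n).map g)) = (Nat.digits b n).map g := by
  have hne : Nat.digits b n ≠ [] := Nat.digits_ne_nil_iff_ne_zero.mpr hn
  refine Nat.digits_ofDigits b (by omega) _ ?_ ?_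
  · intro x hx
    obtain ⟨d, hd, rfl⟩ := List.mem_map.mp hx
    exact hglt d hd
  · intro h
    rw [List.getLast_map]
    exact hg0 _ (List.getLast_mem hne) (Nat.getLast_digit_ne_zero b hn)

/-- Replace each digit `a+1` by `a`. -/
def phi (b a n : ℕ) : ℕ :=
  Nat.ofDigits b ((Nat.digits b n).map (fun d => if d = a + 1 then a else d))

/-- Replace each digit `a` by `a+1`. -/
def psi (b a n : ℕ) : ℕ :=
  Nat.ofDigits b ((Nat.digits b n).map (fun d => if d = a then a + 1 else d))

section
variable {b a : ℕ} (hb : 2 ≤ b) (hab : a + 1 < b) (ha0 : 0 < a)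

include hb hab ha0 in
lemma digits_phi {n : ℕ} (hn : n ≠ 0) :
    Nat.digits b (phi b a n) = (Nat.digits b n).map (fun d => if d = a + 1 then a else d) := by
  refine digits_ofDigits_map b hb _ n hn ?_ ?_
  · intro d hd
    by_cases h : d = a + 1
    · simp [h]; omega
    · simpa [h] using Nat.digits_lt_base (by omega) hd
  · intro d _ hd0
    by_cases h : d = a + 1 <;> simp [h] <;> omega

include hb hab in
lemma digits_psi {n : ℕ} (hn : n ≠ 0) :
    Nat.digits b (psi b a n) = (Nat.digits b n).map (fun d => if d = a then a + 1 else d) := by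
  refine digits_ofDigits_map b hb _ n hn ?_ ?_
  · intro d hd
    by_cases h : d = a
    · simp [h]; omega
    · simpa [h] using Nat.digits_lt_base (by omega) hd
  · intro d _ hd0
    by_cases h : d = a <;> simp [h] <;> omega

include hb hab ha0 in
lemma phi_ne_zero {n : ℕ} (hn : n ≠ 0) : phi b a n ≠ 0 := by
  have hne : Nat.digits b n ≠ [] := Nat.digits_ne_nil_iff_ne_zero.mpr hn
  rw [← Nat.digits_ne_nil_iff_ne_zero, digits_phi hb hab ha0 hn]
  simpa using hne

include hb hab in
lemma psi_ne_zero {n : ℕ} (hn : n ≠ 0) : psi b a n ≠ 0 := by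
  have hne : Nat.digits b n ≠ [] := Nat.digits_ne_nil_iff_ne_zero.mpr hn
  rw [← Nat.digits_ne_nil_iff_ne_zero, digits_psi hb hab hn]
  simpa using hne

lemma phi_le (b a n : ℕ) : phi b a n ≤ n := by
  have := ofDigits_map_le b (fun d => if d = a + 1 then a else d) (Nat.digits b n)
    (fun d _ => by by_cases h : d = a + 1 <;> simp [h] <;> omega)
  calc phi b a n ≤ Nat.ofDigits b (Nat.digits b n) := this
    _ = n := Nat.ofDigits_digits b n

include hb hab ha0 in
lemma psi_phi {n : ℕ} (hn : n ≠ 0) (hA : ∀ d ∈ Nat.digits b n, d ≠ a) :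
    psi b a (phi b a n) = n := by
  unfold psi
  rw [digits_phi hb hab ha0 hn, List.map_map]
  have : ∀ d ∈ Nat.digits b n,
      ((fun d => if d = a then a + 1 else d) ∘ (fun d => if d = a + 1 then a else d)) d = id d := by
    intro d hd
    by_cases h : d = a + 1
    · simp [h]
    · have := hA d hd
      simp [h, this]
  rw [List.map_congr_left this, List.map_id, Nat.ofDigits_digits]

include hb hab in
lemma phi_psi {n : ℕ} (hn : n ≠ 0) (hA : ∀ d ∈ Nat.digits b n, d ≠ a + 1) :
    phi b a (psi b a n) = n := by
  unfold phi
  rw [digits_psi hb hab hn, List.map_map]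
  have : ∀ d ∈ Nat.digits b n,
      ((fun d => if d = a + 1 then a else d) ∘ (fun d => if d = a then a + 1 else d)) d = id d := by
    intro d hd
    by_cases h : d = a
    · simp [h]
    · have := hA d hd
      simp [h, this]
  rw [List.map_congr_left this, List.map_id, Nat.ofDigits_digits]

end

/-- A geometric-sum bound. -/
lemma geom_bound {r : ℝ} (h0 : 0 ≤ r) (h1 : r < 1) (K : ℕ) :
    ∑ k ∈ Finset.range K, r ^ k ≤ (1 - r)⁻¹ := by
  have hr1 : (0 : ℝ) < 1 - r := by linarith
  rw [geom_sum_eq (ne_of_lt h1)]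
  have h2 : (r ^ K - 1) / (r - 1) = (1 - r ^ K) / (1 - r) := by
    rw [div_eq_div_iff (ne_of_lt (by linarith : r - 1 < 0)) (ne_of_gt hr1)]
    ring
  rw [h2, ← one_div]
  have h3 : 1 - r ^ K ≤ 1 := by nlinarith [pow_nonneg h0 K]
  exact (div_le_div_iff_of_pos_right hr1).mpr h3

/-- Counting: at most `(b-1)^k` integers of digit-length `k` avoid the digit `c`. -/
lemma card_avoid_le (b : ℕ) (hb : 2 ≤ b) (c : ℕ) (hcb : c < b) (M k : ℕ) :
    ((Finset.range M).filter (fun n =>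
        (∀ d ∈ Nat.digits b n, d ≠ c) ∧ (Nat.digits b n).length = k)).card
      ≤ (b - 1) ^ k := by
  classical
  have hcard : Fintype.card (Fin k → Fin (b - 1)) = (b - 1) ^ k := by
    simp [Fintype.card_fun]
  rw [← hcard, ← Finset.card_univ]
  set enc : ℕ → ℕ := fun d => if d < c then d else d - 1 with henc
  refine Finset.card_le_card_of_injOn
    (fun n => fun i : Fin k =>
      (⟨min (enc ((Nat.digits b n).getD i 0)) (b - 2),
        lt_of_le_of_lt (min_le_right _ _) (by omega)⟩ : Fin (b - 1)))
    (fun _ _ => Finset.mem_univ _) ?_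
  intro n1 h1 n2 h2 heq
  simp only [Finset.coe_filter, Set.mem_setOf_eq, Finset.mem_range] at h1 h2
  obtain ⟨hn1M, hc1, hl1⟩ := h1
  obtain ⟨hn2M, hc2, hl2⟩ := h2
  have hdig : Nat.digits b n1 = Nat.digits b n2 := by
    apply List.ext_getElem (by rw [hl1, hl2])
    intro i hi1 hi2
    have hik : i < k := by omega
    have := congrFun heq ⟨i, hik⟩
    simp only [Fin.mk.injEq] at this
    have hd1 : (Nat.digits b n1).getD i 0 = (Nat.digits b n1)[i] :=
      List.getD_eq_getElem _ _ hi1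
    have hd2 : (Nat.digits b n2).getD i 0 = (Nat.digits b n2)[i] :=
      List.getD_eq_getElem _ _ hi2
    set d1 := (Nat.digits b n1)[i] with hd1'
    set d2 := (Nat.digits b n2)[i] with hd2'
    have hd1b : d1 < b := Nat.digits_lt_base (by omega) (List.getElem_mem _)
    have hd2b : d2 < b := Nat.digits_lt_base (by omega) (List.getElem_mem _)
    have hd1c : d1 ≠ c := hc1 _ (List.getElem_mem _)
    have hd2c : d2 ≠ c := hc2 _ (List.getElem_mem _)
    rw [hd1, hd2] at this
    simp only [henc, Nat.min_def] at this
    split_ifs at this <;> omega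
  calc n1 = Nat.ofDigits b (Nat.digits b n1) := (Nat.ofDigits_digits b n1).symm
    _ = Nat.ofDigits b (Nat.digits b n2) := by rw [hdig]
    _ = n2 := Nat.ofDigits_digits b n2

/-- Summability of a Kempner-type series when some digit `c < b` is excluded. -/
lemma summable_kempner (b : ℕ) (hb : 2 ≤ b) (E : Finset ℕ) (c : ℕ) (hcE : c ∈ E) (hcb : c < b) :
    Summable (fun n : ℕ => if n ≠ 0 ∧ ∀ d ∈ Nat.digits b n, d ∉ E then (n : ℝ)⁻¹ else 0) := by
  classical
  set f : ℕ → ℝ := fun n => if n ≠ 0 ∧ ∀ d ∈ Nat.digits b n, d ∉ E then (n : ℝ)⁻¹ else 0 with hf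
  have hnonneg : ∀ n, 0 ≤ f n := by
    intro n
    simp only [hf]
    split_ifs <;> positivity
  have hbR : (0:ℝ) < b := by positivity
  refine summable_of_sum_range_le (c := (b : ℝ) * (b : ℝ)) hnonneg ?_
  intro M
  rw [← Finset.sum_filter]
  set S := (Finset.range M).filter
    (fun n => n ≠ 0 ∧ ∀ d ∈ Nat.digits b n, d ∉ E) with hS
  have hmaps : ∀ n ∈ S, (Nat.digits b n).length ∈ Finset.range (M + 1) := by
    intro n hn
    simp only [hS, Finset.mem_filter, Finset.mem_range] at hn
    obtain ⟨hnM, hn0, -⟩ := hn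
    rw [Finset.mem_range, Nat.digits_len b n (by omega) hn0]
    have := Nat.log_lt_self b hn0
    omega
  rw [← Finset.sum_fiberwise_of_maps_to hmaps (fun n => (n : ℝ)⁻¹)]
  have hterm : ∀ k ∈ Finset.range (M + 1),
      (∑ n ∈ S.filter (fun n => (Nat.digits b n).length = k), (n : ℝ)⁻¹)
        ≤ ((b - 1 : ℕ) : ℝ) ^ k * ((b : ℝ) / (b : ℝ) ^ k) := by
    intro k _
    have hcardle : (S.filter (fun n => (Nat.digits b n).length = k)).card ≤ (b - 1) ^ k := by
      refine le_trans (Finset.card_le_card ?_) (card_avoid_le b hb c hcb M k)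
      intro n hn
      simp only [hS, Finset.mem_filter, Finset.mem_range] at hn ⊢
      obtain ⟨⟨hnM, hn0, hnE⟩, hlen⟩ := hn
      exact ⟨hnM, fun d hd hdc => hnE d hd (hdc ▸ hcE), hlen⟩
    have hbound : ∀ n ∈ S.filter (fun n => (Nat.digits b n).length = k),
        (n : ℝ)⁻¹ ≤ (b : ℝ) / (b : ℝ) ^ k := by
      intro n hn
      simp only [hS, Finset.mem_filter, Finset.mem_range] at hn
      obtain ⟨⟨hnM, hn0, -⟩, hlen⟩ := hn
      have hpow : (b : ℕ) ^ k ≤ b * n := by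
        rw [← hlen]; exact Nat.base_pow_length_digits_le b n (by omega) hn0
      have hpowR : (b : ℝ) ^ k ≤ (b : ℝ) * n := by exact_mod_cast hpow
      have hn0R : (0:ℝ) < n := by exact_mod_cast Nat.pos_of_ne_zero hn0
      have h1 : (b:ℝ) ^ k / (b:ℝ) ≤ n := by
        rw [div_le_iff₀ hbR]
        calc (b:ℝ)^k ≤ (b:ℝ) * n := hpowR
          _ = (n:ℝ) * b := by ring
      have h2 : (0:ℝ) < (b:ℝ) ^ k / (b:ℝ) := by positivity
      calc (n:ℝ)⁻¹ ≤ ((b:ℝ) ^ k / (b:ℝ))⁻¹ := inv_anti₀ h2 h1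
        _ = (b : ℝ) / (b : ℝ) ^ k := by rw [inv_div]
    calc (∑ n ∈ S.filter (fun n => (Nat.digits b n).length = k), (n : ℝ)⁻¹)
        ≤ (S.filter (fun n => (Nat.digits b n).length = k)).card •
            ((b : ℝ) / (b : ℝ) ^ k) := Finset.sum_le_card_nsmul _ _ _ hbound
      _ = ((S.filter (fun n => (Nat.digits b n).length = k)).card : ℝ) *
            ((b : ℝ) / (b : ℝ) ^ k) := by rw [nsmul_eq_mul]
      _ ≤ ((b - 1 : ℕ) : ℝ) ^ k * ((b : ℝ) / (b : ℝ) ^ k) := by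
          apply mul_le_mul_of_nonneg_right _ (by positivity)
          exact_mod_cast hcardle
  refine le_trans (Finset.sum_le_sum hterm) ?_
  have hb1R : ((b - 1 : ℕ) : ℝ) = (b : ℝ) - 1 := by
    have : (1:ℕ) ≤ b := by omega
    push_cast [this]; ring
  have hrw : ∀ k, ((b - 1 : ℕ) : ℝ) ^ k * ((b : ℝ) / (b : ℝ) ^ k)
      = (b : ℝ) * (((b : ℝ) - 1) / (b : ℝ)) ^ k := by
    intro k
    rw [hb1R, div_pow]
    field_simp
  rw [Finset.sum_congr rfl (fun k _ => hrw k), ← Finset.mul_sum]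
  have hr0 : (0:ℝ) ≤ ((b : ℝ) - 1) / (b : ℝ) := by
    apply div_nonneg _ (le_of_lt hbR)
    have : (2:ℝ) ≤ b := by exact_mod_cast hb
    linarith
  have hr1 : ((b : ℝ) - 1) / (b : ℝ) < 1 := by
    rw [div_lt_one hbR]; linarith
  have := geom_bound hr0 hr1 (M + 1)
  have hinv : (1 - ((b : ℝ) - 1) / (b : ℝ))⁻¹ = (b : ℝ) := by
    have : 1 - ((b : ℝ) - 1) / (b : ℝ) = (b:ℝ)⁻¹ := by
      field_simp
      ring
    rw [this, inv_inv]
  calc (b:ℝ) * ∑ k ∈ Finset.range (M + 1), (((b : ℝ) - 1) / (b : ℝ)) ^ k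
      ≤ (b:ℝ) * (1 - ((b : ℝ) - 1) / (b : ℝ))⁻¹ :=
        mul_le_mul_of_nonneg_left this (le_of_lt hbR)
    _ = (b:ℝ) * (b:ℝ) := by rw [hinv]

end KempnerAux

theorem kempner_digit_shift (b : ℕ) (hb : 2 ≤ b) (E : Finset ℕ)
    (hEsub : ∀ d ∈ E, d < b) (a : ℕ) (haE : a ∈ E) (ha0 : 0 < a)
    (hab : a < b - 1) (ha1 : a + 1 ∉ E) :
    kempnerSum b E < kempnerSum b (insert (a + 1) (E.erase a)) := by
  classical
  open KempnerAux in
  have hab' : a + 1 < b := by omega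
  set E' : Finset ℕ := insert (a + 1) (E.erase a) with hE'
  set f : ℕ → ℝ := fun n =>
    if n ≠ 0 ∧ ∀ d ∈ Nat.digits b n, d ∉ E then (n : ℝ)⁻¹ else 0 with hfdef
  set g : ℕ → ℝ := fun n =>
    if n ≠ 0 ∧ ∀ d ∈ Nat.digits b n, d ∉ E' then (n : ℝ)⁻¹ else 0 with hgdef
  set h : ℕ → ℝ := fun n =>
    if n ≠ 0 ∧ ∀ d ∈ Nat.digits b n, d ∉ E then ((phi b a n : ℕ) : ℝ)⁻¹ else 0 with hhdef
  -- the image of an E-admissible number is E'-admissible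
  have hadm : ∀ n : ℕ, (n ≠ 0 ∧ ∀ d ∈ Nat.digits b n, d ∉ E) →
      (phi b a n ≠ 0 ∧ ∀ d ∈ Nat.digits b (phi b a n), d ∉ E') := by
    intro n hyp
    obtain ⟨hn0, hnE⟩ := hyp
    refine ⟨phi_ne_zero hb hab' ha0 hn0, ?_⟩
    rw [digits_phi hb hab' ha0 hn0]
    intro d hd
    obtain ⟨d0, hd0, rfl⟩ := List.mem_map.mp hd
    have hd0E := hnE d0 hd0
    rw [hE']
    intro hmem
    by_cases hcase : d0 = a + 1
    · rw [if_pos hcase] at hmem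
      rcases Finset.mem_insert.mp hmem with h1 | h1
      · omega
      · exact (Finset.notMem_erase a E) h1
    · simp only [if_neg hcase] at hmem
      rcases Finset.mem_insert.mp hmem with h1 | h1
      · exact hcase h1
      · exact hd0E (Finset.mem_of_mem_erase h1)
  have hadm' : ∀ n : ℕ, (n ≠ 0 ∧ ∀ d ∈ Nat.digits b n, d ∉ E') →
      (psi b a n ≠ 0 ∧ ∀ d ∈ Nat.digits b (psi b a n), d ∉ E) := by
    intro n hyp
    obtain ⟨hn0, hnE⟩ := hyp
    refine ⟨psi_ne_zero hb hab' hn0, ?_⟩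
    rw [digits_psi hb hab' hn0]
    intro d hd
    obtain ⟨d0, hd0, rfl⟩ := List.mem_map.mp hd
    have hd0E := hnE d0 hd0
    rw [hE'] at hd0E
    by_cases hcase : d0 = a
    · rw [if_pos hcase]
      exact ha1
    · simp only [if_neg hcase]
      intro hmem
      exact hd0E (Finset.mem_insert_of_mem (Finset.mem_erase.mpr ⟨hcase, hmem⟩))
  have havoidA : ∀ n : ℕ, (∀ d ∈ Nat.digits b n, d ∉ E) → ∀ d ∈ Nat.digits b n, d ≠ a := by
    intro n hn d hd hda
    exact hn d hd (hda ▸ haE)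
  have havoidA' : ∀ n : ℕ, (∀ d ∈ Nat.digits b n, d ∉ E') →
      ∀ d ∈ Nat.digits b n, d ≠ a + 1 := by
    intro n hn d hd hda
    refine hn d hd ?_
    rw [hE', hda]
    exact Finset.mem_insert_self _ _
  -- summability of g
  have haE' : a + 1 ∈ E' := by rw [hE']; exact Finset.mem_insert_self _ _
  have hgsummable : Summable g :=
    summable_kempner b hb E' (a + 1) haE' hab'
  -- support facts
  have hsupp_h : ∀ {n : ℕ}, h n ≠ 0 → (n ≠ 0 ∧ ∀ d ∈ Nat.digits b n, d ∉ E) := by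
    intro n hn
    by_contra hc
    apply hn
    simp only [hhdef]
    exact if_neg hc
  have hsupp_g : ∀ {n : ℕ}, g n ≠ 0 → (n ≠ 0 ∧ ∀ d ∈ Nat.digits b n, d ∉ E') := by
    intro n hn
    by_contra hc
    apply hn
    simp only [hgdef]
    exact if_neg hc
  have hval_h : ∀ {n : ℕ}, (n ≠ 0 ∧ ∀ d ∈ Nat.digits b n, d ∉ E) →
      h n = ((phi b a n : ℕ) : ℝ)⁻¹ := by
    intro n hc
    simp only [hhdef]
    exact if_pos hc
  have hval_g : ∀ {n : ℕ}, (n ≠ 0 ∧ ∀ d ∈ Nat.digits b n, d ∉ E') →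
      g n = ((n : ℕ) : ℝ)⁻¹ := by
    intro n hc
    simp only [hgdef]
    exact if_pos hc
  have hto : ∀ x : Function.support h, g (phi b a (x : ℕ)) ≠ 0 := by
    intro x
    have hP' := hadm x (hsupp_h x.2)
    rw [hval_g hP']
    exact inv_ne_zero (Nat.cast_ne_zero.mpr hP'.1)
  have hfrom : ∀ y : Function.support g, h (psi b a (y : ℕ)) ≠ 0 := by
    intro y
    obtain ⟨hy0, hyE⟩ := hsupp_g y.2
    have hP := hadm' y ⟨hy0, hyE⟩
    rw [hval_h hP, phi_psi hb hab' hy0 (havoidA' y hyE)]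
    exact inv_ne_zero (Nat.cast_ne_zero.mpr hy0)
  let e : Function.support h ≃ Function.support g :=
    { toFun := fun x => ⟨phi b a (x : ℕ), hto x⟩
      invFun := fun y => ⟨psi b a (y : ℕ), hfrom y⟩
      left_inv := by
        intro x
        obtain ⟨hx0, hxE⟩ := hsupp_h x.2
        exact Subtype.ext (psi_phi hb hab' ha0 hx0 (havoidA x hxE))
      right_inv := by
        intro y
        obtain ⟨hy0, hyE⟩ := hsupp_g y.2
        exact Subtype.ext (phi_psi hb hab' hy0 (havoidA' y hyE)) }
  have he : ∀ x : Function.support h, g ((e x : ℕ)) = h x := by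
    intro x
    obtain ⟨hx0, hxE⟩ := hsupp_h x.2
    have hP' := hadm x ⟨hx0, hxE⟩
    show g (phi b a (x : ℕ)) = h x
    rw [hval_g hP', hval_h ⟨hx0, hxE⟩]
  have hhsummable : Summable h := (e.summable_iff_of_support he).mpr hgsummable
  have htsum_eq : ∑' n, h n = ∑' n, g n := e.tsum_eq_tsum_of_support he
  -- pointwise inequality
  have hle : ∀ n, f n ≤ h n := by
    intro n
    simp only [hfdef, hhdef]
    by_cases hc : n ≠ 0 ∧ ∀ d ∈ Nat.digits b n, d ∉ E
    · rw [if_pos hc, if_pos hc]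
      have h1 : 0 < phi b a n := Nat.pos_of_ne_zero (phi_ne_zero hb hab' ha0 hc.1)
      have h2 : phi b a n ≤ n := phi_le b a n
      apply inv_anti₀
      · exact_mod_cast h1
      · exact_mod_cast h2
    · rw [if_neg hc, if_neg hc]
  have hnonneg : ∀ n, 0 ≤ f n := by
    intro n
    simp only [hfdef]
    split_ifs <;> positivity
  -- strict inequality at n = a + 1
  have hdigs : Nat.digits b (a + 1) = [a + 1] := by
    rw [Nat.digits_def' (by omega : 1 < b) (by omega : 0 < a + 1)]
    rw [Nat.mod_eq_of_lt hab', Nat.div_eq_of_lt hab']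
    simp
  have hPa : (a + 1 ≠ 0 ∧ ∀ d ∈ Nat.digits b (a + 1), d ∉ E) := by
    refine ⟨by omega, ?_⟩
    rw [hdigs]
    intro d hd
    simp only [List.mem_singleton] at hd
    subst hd
    exact ha1
  have hphi_a : phi b a (a + 1) = a := by
    unfold KempnerAux.phi
    rw [hdigs]
    simp [Nat.ofDigits]
  have hstrict : f (a + 1) < h (a + 1) := by
    simp only [hfdef, hhdef]
    rw [if_pos hPa, if_pos hPa, hphi_a]
    have h0a : (0:ℝ) < a := by exact_mod_cast ha0
    apply inv_strictAnti₀ h0a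
    exact_mod_cast Nat.lt_succ_self a
  have hmain : ∑' n, f n < ∑' n, h n :=
    Summable.tsum_lt_tsum_of_nonneg hnonneg hle hstrict hhsummable
  have hKE : kempnerSum b E = ∑' n, f n := rfl
  have hKE' : kempnerSum b E' = ∑' n, g n := rfl
  calc kempnerSum b E = ∑' n, f n := hKE
    _ < ∑' n, h n := hmain
    _ = ∑' n, g n := htsum_eq
    _ = kempnerSum b E' := hKE'.symm
end

section
/- Let b ≥ 2 be an integer and 1 ≤ p < b. Then K(b, {b−1, b−2, …, b−p}) < K(b, {0, b−1, b−2, …, b−p+1}); i.e., among the two candidate extremal excluded sets of cardinality p, the one containing 0 together with the p−1 largest digits gives the strictly larger Kempner sum. -/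
open MeasureTheory Real ENNReal

namespace KempnerAux

def bd (m : ℕ) (k : ℕ) : List ℕ :=
  if h : k = 0 ∨ m = 0 then [] else
    (if m ∣ k then m else k % m) :: bd m ((k - (if m ∣ k then m else k % m)) / m)
termination_by k
decreasing_by
  push_neg at h
  have hd : 1 ≤ (if m ∣ k then m else k % m) := by
    split
    · omega
    · next hdvd => exact Nat.pos_of_ne_zero fun h0 => hdvd (Nat.dvd_of_mod_eq_zero h0)
  calc (k - (if m ∣ k then m else k % m)) / m ≤ k - (if m ∣ k then m else k % m) :=
        Nat.div_le_self _ _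
    _ < k := by omega

lemma bd_zero (m : ℕ) : bd m 0 = [] := by rw [bd]; simp

lemma bd_cons1 {m r : ℕ} (q : ℕ) (hr : 1 ≤ r) (hrm : r < m) :
    bd m (r + m * q) = r :: bd m q := by
  have hm : m ≠ 0 := by omega
  have hnd : ¬ m ∣ (r + m * q) := by
    intro hd
    have : m ∣ r := (Nat.dvd_add_right (Dvd.intro q rfl)).mp (by rwa [add_comm] at hd)
    exact absurd (Nat.le_of_dvd (by omega) this) (by omega)
  rw [bd]
  have hk : ¬ (r + m * q = 0 ∨ m = 0) := by omega
  rw [dif_neg hk, if_neg hnd]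
  have h1 : (r + m * q) % m = r := by
    rw [Nat.add_mul_mod_self_left, Nat.mod_eq_of_lt hrm]
  have h2 : (r + m * q - r) / m = q := by
    have h3 : r + m * q - r = m * q := by omega
    rw [h3, Nat.mul_div_cancel_left _ (Nat.pos_of_ne_zero hm)]
  rw [h1, h2]

lemma bd_cons2 {m : ℕ} (q : ℕ) (hm : 1 ≤ m) :
    bd m (m * q + m) = m :: bd m q := by
  have hd : m ∣ (m * q + m) := ⟨q + 1, by ring⟩
  rw [bd]
  have hk : ¬ (m * q + m = 0 ∨ m = 0) := by
    push_neg; constructor <;> omega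
  rw [dif_neg hk, if_pos hd]
  congr 1
  have h3 : m * q + m - m = m * q := by omega
  rw [h3, Nat.mul_div_cancel_left _ (by omega)]

/-- Decomposition helper: every `k ≠ 0` is `r + m*q` with `1 ≤ r < m`, `q = k/m`,
or `m*q + m` with `q = k/m - 1`. -/
lemma decomp {m : ℕ} (hm : 1 ≤ m) (k : ℕ) (hk : k ≠ 0) :
    (∃ q r, 1 ≤ r ∧ r < m ∧ k = r + m * q ∧ q < k) ∨
    (∃ q, k = m * q + m ∧ q < k) := by
  have h0 := Nat.mod_add_div k m
  have h1 : k % m < m := Nat.mod_lt _ (by omega)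
  rcases Nat.eq_zero_or_pos (k % m) with hr | hr
  · right
    have hq : 1 ≤ k / m := by
      rcases Nat.eq_zero_or_pos (k / m) with h | h
      · rw [h, Nat.mul_zero] at h0; omega
      · exact h
    refine ⟨k / m - 1, ?_, ?_⟩
    · have h2 : k / m - 1 + 1 = k / m := by omega
      have h5 : m * (k / m - 1) + m = m * (k / m) := by
        calc m * (k / m - 1) + m = m * (k / m - 1 + 1) := by ring
          _ = m * (k / m) := by rw [h2]
      omega
    · have : k / m ≤ k := Nat.div_le_self _ _
      omega
  · left
    have hm2 : 2 ≤ m := by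
      rcases Nat.eq_or_lt_of_le hm with he | hl
      · have h5 : k % 1 = 0 := Nat.mod_one k
        omega
      · omega
    exact ⟨k / m, k % m, hr, h1, by omega, Nat.div_lt_self (by omega) hm2⟩

lemma bd_mem {m : ℕ} (hm : 1 ≤ m) : ∀ k, ∀ d ∈ bd m k, 1 ≤ d ∧ d ≤ m := by
  intro k
  induction k using Nat.strong_induction_on with
  | _ k IH =>
    rcases Nat.eq_zero_or_pos k with rfl | hk
    · rw [bd_zero]; intro d hd; simp at hd
    · rcases decomp hm k (by omega) with ⟨q, r, h1, h2, h3, h4⟩ | ⟨q, h3, h4⟩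
      · rw [h3, bd_cons1 q h1 h2]
        intro d hd
        rcases List.mem_cons.1 hd with rfl | hd'
        · omega
        · exact IH q (by omega) d hd'
      · rw [h3, bd_cons2 q hm]
        intro d hd
        rcases List.mem_cons.1 hd with rfl | hd'
        · omega
        · exact IH q (by omega) d hd'

lemma ofDigits_bd {m : ℕ} (hm : 1 ≤ m) : ∀ k, Nat.ofDigits m (bd m k) = k := by
  intro k
  induction k using Nat.strong_induction_on with
  | _ k IH =>
    rcases Nat.eq_zero_or_pos k with rfl | hk
    · rw [bd_zero]; simp [Nat.ofDigits]
    · rcases decomp hm k (by omega) with ⟨q, r, h1, h2, h3, h4⟩ | ⟨q, h3, h4⟩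
      · rw [h3, bd_cons1 q h1 h2, Nat.ofDigits_cons, IH q (by omega)]
      · rw [h3, bd_cons2 q hm, Nat.ofDigits_cons, IH q (by omega)]
        push_cast
        ring

lemma bd_ofDigits {m : ℕ} (hm : 1 ≤ m) :
    ∀ L : List ℕ, (∀ d ∈ L, 1 ≤ d ∧ d ≤ m) → bd m (Nat.ofDigits m L) = L := by
  intro L
  induction L with
  | nil => intro _; simpa using bd_zero m
  | cons d T IH =>
    intro hL
    have hd := hL d List.mem_cons_self
    have hT : ∀ d ∈ T, 1 ≤ d ∧ d ≤ m := fun x hx => hL x (List.mem_cons_of_mem _ hx)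
    rw [Nat.ofDigits_cons]
    rcases Nat.lt_or_ge d m with h | h
    · have : (d : ℕ) + m * Nat.ofDigits m T = d + m * Nat.ofDigits m T := by push_cast; ring
      rw [show ((d : ℕ) + m * Nat.ofDigits m T : ℕ) = d + m * (Nat.ofDigits m T : ℕ) by push_cast; ring]
      rw [bd_cons1 _ hd.1 h, IH hT]
    · have hdm : d = m := by omega
      subst hdm
      rw [show ((d : ℕ) + d * Nat.ofDigits d T : ℕ) = d * (Nat.ofDigits d T : ℕ) + d by push_cast; ring]
      rw [bd_cons2 _ hm, IH hT]

open Nat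

lemma digits_cons {m r q : ℕ} (hm : 2 ≤ m) (hr : r < m) (hk : r + m * q ≠ 0) :
    Nat.digits m (r + m * q) = r :: Nat.digits m q := by
  rw [Nat.digits_def' (by omega : 1 < m) (by omega : 0 < r + m * q)]
  have h1 : (r + m * q) % m = r := by
    rw [Nat.add_mul_mod_self_left, Nat.mod_eq_of_lt hr]
  have h2 : (r + m * q) / m = q := by
    rw [Nat.add_mul_div_left _ _ (by omega : 0 < m), Nat.div_eq_of_lt hr, Nat.zero_add]
  rw [h1, h2]

lemma mul_lt_bound {b x y : ℕ} (h : x < y) : b * x + b ≤ b * y := by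
  have h2 : x + 1 ≤ y := h
  calc b * x + b = b * (x + 1) := by ring
    _ ≤ b * y := Nat.mul_le_mul_left b h2

lemma sigma'_pos {b m k : ℕ} (hm : 1 ≤ m) (hk : k ≠ 0) :
    1 ≤ Nat.ofDigits b (bd m k) := by
  rcases decomp hm k hk with ⟨q, r, h1, h2, h3, _⟩ | ⟨q, h3, _⟩
  · rw [h3, bd_cons1 q h1 h2, Nat.ofDigits_cons]; omega
  · rw [h3, bd_cons2 q hm, Nat.ofDigits_cons]; omega

lemma sigma'_succ {b m : ℕ} (hm : 1 ≤ m) (hmb : m < b) :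
    ∀ k, Nat.ofDigits b (bd m k) < Nat.ofDigits b (bd m (k + 1)) := by
  intro k
  induction k using Nat.strong_induction_on with
  | _ k IH =>
    rcases Nat.eq_zero_or_pos k with rfl | hk
    · rw [bd_zero]
      have h := sigma'_pos (b := b) hm one_ne_zero
      simp only [Nat.ofDigits_nil, Nat.zero_add]
      omega
    · rcases decomp hm k (by omega) with ⟨q, r, h1, h2, h3, h4⟩ | ⟨q, h3, h4⟩
      · -- k = r + m*q with 1 ≤ r < m
        rcases Nat.lt_or_ge (r + 1) m with hrm | hrm
        · have e1 : k + 1 = (r + 1) + m * q := by omega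
          rw [e1, h3, bd_cons1 q h1 h2, bd_cons1 q (by omega) hrm,
            Nat.ofDigits_cons, Nat.ofDigits_cons]
          omega
        · have hr1 : r + 1 = m := by omega
          have e1 : k + 1 = m * q + m := by omega
          rw [e1, h3, bd_cons1 q h1 h2, bd_cons2 q hm,
            Nat.ofDigits_cons, Nat.ofDigits_cons]
          omega
      · -- k = m*q + m
        have hbd1 : bd m (k + 1) = 1 :: bd m (q + 1) := by
          rcases Nat.eq_or_lt_of_le hm with he | hm2
          · have e1 : k + 1 = m * (q + 1) + m := by rw [h3, ← he]; ring
            rw [e1, bd_cons2 (q + 1) hm, ← he]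
          · have e1 : k + 1 = 1 + m * (q + 1) := by rw [h3]; ring
            rw [e1, bd_cons1 (q + 1) le_rfl hm2]
        have hIH := IH q h4
        rw [hbd1, h3, bd_cons2 q hm, Nat.ofDigits_cons, Nat.ofDigits_cons]
        have hb1 := mul_lt_bound (b := b) hIH
        omega

lemma sigma_succ {b m : ℕ} (hm : 2 ≤ m) (hmb : m < b) :
    ∀ k, Nat.ofDigits b (Nat.digits m k) < Nat.ofDigits b (Nat.digits m (k + 1)) := by
  intro k
  induction k using Nat.strong_induction_on with
  | _ k IH =>
    rcases Nat.eq_zero_or_pos k with rfl | hk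
    · have e1 : Nat.digits m 1 = [1] := by
        have e2 : (1 : ℕ) = 1 + m * 0 := by ring
        rw [e2, digits_cons hm (by omega) (by omega)]
        simp
      rw [Nat.digits_zero, show (0 : ℕ) + 1 = 1 from rfl, e1]
      simp [Nat.ofDigits_cons, Nat.ofDigits_nil]
    · rcases decomp (by omega : 1 ≤ m) k (by omega) with ⟨q, r, h1, h2, h3, h4⟩ | ⟨q, h3, h4⟩
      · rcases Nat.lt_or_ge (r + 1) m with hrm | hrm
        · have e1 : k + 1 = (r + 1) + m * q := by omega
          rw [e1, h3, digits_cons hm h2 (by omega), digits_cons hm hrm (by omega),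
            Nat.ofDigits_cons, Nat.ofDigits_cons]
          omega
        · have hr1 : r + 1 = m := by omega
          have e1 : k + 1 = 0 + m * (q + 1) := by rw [h3, ← hr1]; ring
          have hIH := IH q h4
          rw [e1, h3, digits_cons hm h2 (by omega), digits_cons hm (by omega) (by omega),
            Nat.ofDigits_cons, Nat.ofDigits_cons]
          have hb1 := mul_lt_bound (b := b) hIH
          omega
      · -- k = m*q + m = 0 + m*(q+1)
        have e0 : k = 0 + m * (q + 1) := by rw [h3]; ring
        have e1 : k + 1 = 1 + m * (q + 1) := by rw [h3]; ring
        rw [e1, e0, digits_cons hm (by omega) (by omega), digits_cons hm (by omega) (by omega),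
          Nat.ofDigits_cons, Nat.ofDigits_cons]
        omega

lemma sigma'_le_sigma {b m : ℕ} (hm : 2 ≤ m) (hmb : m < b) :
    ∀ k, Nat.ofDigits b (bd m k) ≤ Nat.ofDigits b (Nat.digits m k) := by
  intro k
  induction k using Nat.strong_induction_on with
  | _ k IH =>
    rcases Nat.eq_zero_or_pos k with rfl | hk
    · rw [bd_zero]; simp
    · rcases decomp (by omega : 1 ≤ m) k (by omega) with ⟨q, r, h1, h2, h3, h4⟩ | ⟨q, h3, h4⟩
      · rw [h3, bd_cons1 q h1 h2, digits_cons hm h2 (by omega),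
          Nat.ofDigits_cons, Nat.ofDigits_cons]
        have := Nat.mul_le_mul_left b (IH q h4)
        omega
      · have e0 : k = 0 + m * (q + 1) := by rw [h3]; ring
        have hIH := IH q h4
        have hs := sigma_succ (b := b) hm hmb q
        calc Nat.ofDigits b (bd m k) = m + b * Nat.ofDigits b (bd m q) := by
              rw [h3, bd_cons2 q (by omega), Nat.ofDigits_cons]
          _ ≤ Nat.ofDigits b (Nat.digits m k) := by
              rw [e0, digits_cons hm (by omega) (by omega), Nat.ofDigits_cons]
              have hb1 : b * Nat.ofDigits b (bd m q) ≤ b * Nat.ofDigits b (Nat.digits m q) :=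
                Nat.mul_le_mul_left b hIH
              have hb2 := mul_lt_bound (b := b) hs
              omega

lemma pow_le_mul_ofDigits {b : ℕ} :
    ∀ L : List ℕ, L ≠ [] → (∀ d ∈ L, 1 ≤ d) → b ^ L.length ≤ b * Nat.ofDigits b L := by
  intro L
  induction L with
  | nil => intro h; exact absurd rfl h
  | cons d T IH =>
    intro _ hL
    have hd : 1 ≤ d := hL d List.mem_cons_self
    rcases List.eq_nil_or_concat T with rfl | hT
    · simpa [Nat.ofDigits_cons] using Nat.le_mul_of_pos_right b hd
    · have hTne : T ≠ [] := by rcases hT with ⟨a, c, rfl⟩; simp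
      have hIH := IH hTne (fun x hx => hL x (List.mem_cons_of_mem _ hx))
      rw [Nat.ofDigits_cons]
      calc b ^ (d :: T).length = b * b ^ T.length := by rw [List.length_cons]; ring
        _ ≤ b * (b * Nat.ofDigits b T) := Nat.mul_le_mul_left b hIH
        _ ≤ b * (d + b * Nat.ofDigits b T) := Nat.mul_le_mul_left b (by omega)

lemma ofDigits_add_le {m : ℕ} (hm : 2 ≤ m) :
    ∀ L : List ℕ, (∀ d ∈ L, d ≤ m) → Nat.ofDigits m L + m ≤ m ^ (L.length + 1) := by
  intro L
  induction L with
  | nil => simp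
  | cons d T IH =>
    intro hL
    have hd : d ≤ m := hL d List.mem_cons_self
    have hIH := IH (fun x hx => hL x (List.mem_cons_of_mem _ hx))
    rw [Nat.ofDigits_cons, List.length_cons]
    have h1 : m * (Nat.ofDigits m T + m) ≤ m * m ^ (T.length + 1) :=
      Nat.mul_le_mul_left m hIH
    have h2 : m * m ^ (T.length + 1) = m ^ (T.length + 1 + 1) := by ring
    nlinarith [Nat.ofDigits m T, sq_nonneg m]

lemma bd_one_len : ∀ k, (bd 1 k).length = k := by
  intro k
  induction k using Nat.strong_induction_on with
  | _ k IH =>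
    rcases Nat.eq_zero_or_pos k with rfl | hk
    · rw [bd_zero]; rfl
    · have e0 : k = 1 * (k - 1) + 1 := by omega
      rw [e0, bd_cons2 (k - 1) le_rfl, List.length_cons, IH (k - 1) (by omega)]
      omega

lemma bd_ne_nil {m k : ℕ} (hm : 1 ≤ m) (hk : k ≠ 0) : bd m k ≠ [] := by
  intro h
  have h2 := ofDigits_bd hm k
  rw [h, Nat.ofDigits_nil] at h2
  exact hk h2.symm

lemma digits_one_eq {m : ℕ} (hm : 2 ≤ m) : Nat.digits m 1 = [1] := by
  have e2 : (1 : ℕ) = 1 + m * 0 := by ring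
  rw [e2, digits_cons hm (by omega) (by omega)]
  simp

end KempnerAux

open KempnerAux in
theorem kempner_U_lt_T' (b : ℕ) (hb : 2 ≤ b) (p : ℕ) (hp : 1 ≤ p) (hpb : p < b) :
    (∑' n : ℕ, if n ≠ 0 ∧ ∀ d ∈ Nat.digits b n, d ∉ Finset.Ico (b - p) b then (n : ℝ)⁻¹ else 0) <
    (∑' n : ℕ, if n ≠ 0 ∧ ∀ d ∈ Nat.digits b n, d ∉ insert 0 (Finset.Ico (b - p + 1) b) then
      (n : ℝ)⁻¹ else 0) := by
  have hb1 : 1 < b := by omega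
  set m : ℕ := b - p with hmdef
  have hm1 : 1 ≤ m := by omega
  have hmb : m < b := by omega
  set f : ℕ → ℝ := fun n =>
    if n ≠ 0 ∧ ∀ d ∈ Nat.digits b n, d ∉ Finset.Ico (b - p) b then (n : ℝ)⁻¹ else 0 with hfdef
  set g : ℕ → ℝ := fun n =>
    if n ≠ 0 ∧ ∀ d ∈ Nat.digits b n, d ∉ insert 0 (Finset.Ico (b - p + 1) b) then (n : ℝ)⁻¹
    else 0 with hgdef
  have hf0 : ∀ n : ℕ, 0 ≤ f n := by
    intro n; rw [hfdef]; dsimp only; split <;> positivity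
  have hg0 : ∀ n : ℕ, 0 ≤ g n := by
    intro n; rw [hgdef]; dsimp only; split <;> positivity
  -- the enumeration of numbers avoiding the digits of `E' = {0} ∪ [m+1, b)`
  set s' : ℕ → ℕ := fun k => Nat.ofDigits b (bd m k) with hs'def
  have hs'mono : StrictMono s' := strictMono_nat_of_lt_succ fun k => sigma'_succ hm1 hmb k
  have hs'0 : s' 0 = 0 := by rw [hs'def]; dsimp only; rw [bd_zero, Nat.ofDigits_nil]
  have hgd : ∀ n : ℕ, n ≠ 0 →
      ((∀ d ∈ Nat.digits b n, d ∉ insert 0 (Finset.Ico (b - p + 1) b)) ↔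
        (∀ d ∈ Nat.digits b n, 1 ≤ d ∧ d ≤ m)) := by
    intro n hn
    constructor
    · intro h d hd
      have hdb : d < b := Nat.digits_lt_base hb1 hd
      have h2 := h d hd
      simp only [Finset.mem_insert, Finset.mem_Ico, not_or, not_and, not_lt] at h2
      omega
    · intro h d hd
      have h2 := h d hd
      simp only [Finset.mem_insert, Finset.mem_Ico, not_or, not_and, not_lt]
      omega
  have hGk : ∀ k : ℕ, k ≠ 0 → g (s' k) = ((s' k : ℕ) : ℝ)⁻¹ := by
    intro k hk
    have hsk0 : s' k ≠ 0 := by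
      have := sigma'_pos (b := b) hm1 hk
      rw [hs'def]; dsimp only; omega
    have hdig : Nat.digits b (s' k) = bd m k := by
      rw [hs'def]; dsimp only
      refine Nat.digits_ofDigits b hb1 (bd m k) (fun d hd => ?_) (fun h => ?_)
      · have := bd_mem hm1 k d hd; omega
      · have := bd_mem hm1 k _ (List.getLast_mem h); omega
    rw [hgdef]; dsimp only
    rw [if_pos]
    refine ⟨hsk0, ?_⟩
    rw [hdig]
    intro d hd
    have h2 := bd_mem hm1 k d hd
    simp only [Finset.mem_insert, Finset.mem_Ico, not_or, not_and, not_lt]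
    omega
  have hG0 : g (s' 0) = 0 := by
    rw [hs'0, hgdef]; dsimp only
    rw [if_neg]; rintro ⟨h0, -⟩; exact h0 rfl
  have hGrange : ∀ n : ℕ, n ∉ Set.range s' → g n = 0 := by
    intro n hn
    rw [hgdef]; dsimp only
    rw [if_neg]
    rintro ⟨hn0, hdig⟩
    apply hn
    have hmem : ∀ d ∈ Nat.digits b n, 1 ≤ d ∧ d ≤ m := (hgd n hn0).1 hdig
    refine ⟨Nat.ofDigits m (Nat.digits b n), ?_⟩
    rw [hs'def]; dsimp only
    rw [bd_ofDigits hm1 _ hmem, Nat.ofDigits_digits]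
  have htg : ∑' k : ℕ, g (s' k) = ∑' n : ℕ, g n :=
    hs'mono.injective.tsum_eq fun x hx => by
      by_contra h
      exact hx (hGrange x (by simpa using h))
  -- positivity bound for `s'`
  have hs'pos : ∀ k : ℕ, k ≠ 0 → 0 < s' k := by
    intro k hk
    have := sigma'_pos (b := b) hm1 hk
    rw [hs'def]; dsimp only; omega
  rcases eq_or_lt_of_le hm1 with hm1' | hm2
  · -- m = 1 : the left sum is zero, the right sum is positive
    have hfzero : ∀ n : ℕ, f n = 0 := by
      intro n
      rw [hfdef]; dsimp only
      rw [if_neg]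
      rintro ⟨hn0, hall⟩
      have hne : Nat.digits b n ≠ [] := Nat.digits_ne_nil_iff_ne_zero.mpr hn0
      have hlast := Nat.getLast_digit_ne_zero b hn0
      have hmem : (Nat.digits b n).getLast hne ∈ Nat.digits b n := List.getLast_mem hne
      have hdb : (Nat.digits b n).getLast hne < b := Nat.digits_lt_base hb1 hmem
      have := hall _ hmem
      rw [Finset.mem_Ico] at this
      omega
    -- summability of `g ∘ s'` by a geometric bound
    have hGle : ∀ k : ℕ, g (s' k) ≤ (b : ℝ) * ((b : ℝ)⁻¹) ^ k := by
      intro k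
      rcases Nat.eq_zero_or_pos k with rfl | hk
      · rw [hG0]; positivity
      · rw [hGk k (by omega)]
        have hlen : (bd m k).length = k := by rw [← hm1']; exact bd_one_len k
        have hpow : b ^ k ≤ b * s' k := by
          have := pow_le_mul_ofDigits (b := b) (bd m k)
            (bd_ne_nil hm1 (by omega)) (fun d hd => (bd_mem hm1 k d hd).1)
          rw [hlen] at this
          exact this
        have hb0 : (0 : ℝ) < b := by positivity
        have hsk : (0 : ℝ) < (s' k : ℝ) := by exact_mod_cast hs'pos k (by omega)
        have hpowR : ((b : ℝ)) ^ k ≤ (b : ℝ) * (s' k : ℝ) := by exact_mod_cast hpow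
        have h1 : ((s' k : ℕ) : ℝ)⁻¹ ≤ (b : ℝ) * ((b : ℝ) ^ k)⁻¹ := by
          rw [← one_div, ← div_eq_mul_inv, div_le_div_iff₀ hsk (by positivity)]
          linarith
        rw [← inv_pow] at h1
        exact h1
    have hGsum : Summable fun k : ℕ => g (s' k) := by
      refine Summable.of_nonneg_of_le (fun k => hg0 _) hGle ?_
      exact (summable_geometric_of_lt_one (by positivity)
        (by rw [inv_lt_one_iff₀]; right; exact_mod_cast hb1)).mul_left _
    have hgsum : Summable g :=
      (hs'mono.injective.summable_iff (fun x hx => hGrange x hx)).1 hGsum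
    have hL : (∑' n : ℕ, f n) = 0 := by
      rw [show f = fun _ => (0 : ℝ) from funext hfzero]
      exact tsum_zero
    rw [hL]
    have hg1 : 0 < g 1 := by
      rw [hgdef]; dsimp only
      rw [if_pos]
      · norm_num
      · refine ⟨one_ne_zero, ?_⟩
        intro d hd
        rw [Nat.digits_def' hb1 (by omega)] at hd
        have h1 : (1 : ℕ) % b = 1 := Nat.mod_eq_of_lt hb1
        have h2 : (1 : ℕ) / b = 0 := Nat.div_eq_of_lt hb1
        rw [h1, h2, Nat.digits_zero] at hd
        simp only [List.mem_singleton] at hd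
        subst hd
        simp only [Finset.mem_insert, Finset.mem_Ico, not_or, not_and, not_lt]
        omega
    exact Summable.tsum_pos hgsum hg0 1 hg1
  · -- 2 ≤ m
    set s : ℕ → ℕ := fun k => Nat.ofDigits b (Nat.digits m k) with hsdef
    have hsmono : StrictMono s := strictMono_nat_of_lt_succ fun k => sigma_succ hm2 hmb k
    have hs0 : s 0 = 0 := by rw [hsdef]; dsimp only; rw [Nat.digits_zero, Nat.ofDigits_nil]
    have hspos : ∀ k : ℕ, k ≠ 0 → 0 < s k := by
      intro k hk
      have : s 0 < s k := hsmono (by omega)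
      omega
    have hfd : ∀ n : ℕ, n ≠ 0 →
        ((∀ d ∈ Nat.digits b n, d ∉ Finset.Ico (b - p) b) ↔
          (∀ d ∈ Nat.digits b n, d < m)) := by
      intro n hn
      constructor
      · intro h d hd
        have hdb : d < b := Nat.digits_lt_base hb1 hd
        have h2 := h d hd
        rw [Finset.mem_Ico] at h2
        omega
      · intro h d hd
        have h2 := h d hd
        rw [Finset.mem_Ico]
        omega
    have hFk : ∀ k : ℕ, k ≠ 0 → f (s k) = ((s k : ℕ) : ℝ)⁻¹ := by
      intro k hk
      have hsk0 : s k ≠ 0 := (hspos k hk).ne'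
      have hdig : Nat.digits b (s k) = Nat.digits m k := by
        rw [hsdef]; dsimp only
        refine Nat.digits_ofDigits b hb1 _ (fun d hd => ?_) (fun h => ?_)
        · have := Nat.digits_lt_base hm2 hd; omega
        · exact Nat.getLast_digit_ne_zero m hk
      rw [hfdef]; dsimp only
      rw [if_pos]
      refine ⟨hsk0, ?_⟩
      rw [hdig]
      intro d hd
      have h2 := Nat.digits_lt_base hm2 hd
      rw [Finset.mem_Ico]
      omega
    have hF0 : f (s 0) = 0 := by
      rw [hs0, hfdef]; dsimp only
      rw [if_neg]; rintro ⟨h0, -⟩; exact h0 rfl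
    have hFrange : ∀ n : ℕ, n ∉ Set.range s → f n = 0 := by
      intro n hn
      rw [hfdef]; dsimp only
      rw [if_neg]
      rintro ⟨hn0, hdig⟩
      apply hn
      have hmem : ∀ d ∈ Nat.digits b n, d < m := (hfd n hn0).1 hdig
      refine ⟨Nat.ofDigits m (Nat.digits b n), ?_⟩
      rw [hsdef]; dsimp only
      rw [Nat.digits_ofDigits m hm2 _ (fun d hd => hmem d hd)
        (fun h => Nat.getLast_digit_ne_zero b hn0), Nat.ofDigits_digits]
    have htf : ∑' k : ℕ, f (s k) = ∑' n : ℕ, f n :=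
      hsmono.injective.tsum_eq fun x hx => by
        by_contra h
        exact hx (hFrange x (by simpa using h))
    -- termwise comparison
    have hFG : ∀ k : ℕ, f (s k) ≤ g (s' k) := by
      intro k
      rcases Nat.eq_zero_or_pos k with rfl | hk
      · rw [hF0, hG0]
      · rw [hFk k (by omega), hGk k (by omega)]
        have h1 : s' k ≤ s k := sigma'_le_sigma hm2 hmb k
        have h2 : (0 : ℝ) < (s' k : ℝ) := by exact_mod_cast hs'pos k (by omega)
        apply inv_anti₀ h2
        exact_mod_cast h1
    -- summability of `g ∘ s'` via the p-series bound
    set t : ℝ := Real.logb m b with htdef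
    have hmR : (1 : ℝ) < (m : ℝ) := by exact_mod_cast hm2
    have hbR : (0 : ℝ) < (b : ℝ) := by positivity
    have ht1 : 1 < t := by
      rw [htdef, ← Real.rpow_lt_rpow_left_iff hmR, Real.rpow_logb (by linarith) hmR.ne' hbR,
        Real.rpow_one]
      exact_mod_cast hmb
    have ht0 : 0 < t := by linarith
    have hGle : ∀ k : ℕ, g (s' k) ≤ (b : ℝ) ^ 2 * (((k : ℝ) ^ t)⁻¹) := by
      intro k
      rcases Nat.eq_zero_or_pos k with rfl | hk
      · rw [hG0, Nat.cast_zero, Real.zero_rpow ht0.ne']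
        norm_num
      · rw [hGk k (by omega)]
        set L : ℕ := (bd m k).length with hLdef
        have hpow : b ^ L ≤ b * s' k := by
          exact pow_le_mul_ofDigits (b := b) (bd m k)
            (bd_ne_nil hm1 (by omega)) (fun d hd => (bd_mem hm1 k d hd).1)
        have hkle : k ≤ m ^ (L + 1) := by
          have h3 := ofDigits_add_le hm2 (bd m k) (fun d hd => (bd_mem hm1 k d hd).2)
          rw [ofDigits_bd hm1 k, ← hLdef] at h3
          omega
        have hkt : ((k : ℝ)) ^ t ≤ (b : ℝ) ^ (L + 1) := by
          have h4 : ((k : ℝ)) ^ t ≤ ((m ^ (L + 1) : ℕ) : ℝ) ^ t := by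
            apply Real.rpow_le_rpow (by positivity) _ ht0.le
            exact_mod_cast hkle
          refine h4.trans_eq ?_
          push_cast
          rw [← Real.rpow_natCast ((m : ℝ)) (L + 1), ← Real.rpow_natCast ((b : ℝ)) (L + 1),
            ← Real.rpow_mul (by positivity), mul_comm ((L + 1 : ℕ) : ℝ) t,
            Real.rpow_mul (by positivity), htdef,
            Real.rpow_logb (by linarith) hmR.ne' hbR]
        have hsk : (0 : ℝ) < (s' k : ℝ) := by exact_mod_cast hs'pos k (by omega)
        have hmulR : ((b : ℝ)) ^ (L + 1) ≤ (b : ℝ) ^ 2 * (s' k : ℝ) := by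
          have h5 : b ^ (L + 1) ≤ b ^ 2 * s' k := by
            calc b ^ (L + 1) = b * b ^ L := by ring
              _ ≤ b * (b * s' k) := Nat.mul_le_mul_left b hpow
              _ = b ^ 2 * s' k := by ring
          exact_mod_cast h5
        have hktpos : (0 : ℝ) < ((k : ℝ)) ^ t := by
          apply Real.rpow_pos_of_pos
          exact_mod_cast hk
        rw [← one_div, ← div_eq_mul_inv, div_le_div_iff₀ hsk hktpos]
        nlinarith
    have hGsum : Summable fun k : ℕ => g (s' k) := by
      refine Summable.of_nonneg_of_le (fun k => hg0 _) hGle ?_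
      exact (Real.summable_nat_rpow_inv.2 ht1).mul_left _
    have hFsum : Summable fun k : ℕ => f (s k) :=
      Summable.of_nonneg_of_le (fun k => hf0 _) hFG hGsum
    -- strict inequality at index `m`
    have hsm : s m = b := by
      rw [hsdef]; dsimp only
      rw [Nat.digits_def' (by omega : 1 < m) (by omega : 0 < m), Nat.mod_self,
        Nat.div_self (by omega : 0 < m), digits_one_eq hm2]
      simp [Nat.ofDigits_cons, Nat.ofDigits_nil]
    have hs'm : s' m = m := by
      rw [hs'def]; dsimp only
      have e1 : bd m m = [m] := by
        have h2 := bd_cons2 (m := m) 0 hm1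
        rw [Nat.mul_zero, Nat.zero_add] at h2
        rw [h2, bd_zero]
      rw [e1]
      simp [Nat.ofDigits_cons, Nat.ofDigits_nil]
    have hstrict : f (s m) < g (s' m) := by
      rw [hFk m (by omega), hGk m (by omega), hsm, hs'm]
      apply inv_strictAnti₀
      · have h2 : 0 < m := by omega
        exact_mod_cast h2
      · exact_mod_cast hmb
    calc (∑' n : ℕ, f n) = ∑' k : ℕ, f (s k) := htf.symm
      _ < ∑' k : ℕ, g (s' k) := Summable.tsum_lt_tsum hFG hstrict hFsum hGsum
      _ = ∑' n : ℕ, g n := htg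

theorem kempner_U_lt_T (b : ℕ) (hb : 2 ≤ b) (p : ℕ) (hp : 1 ≤ p) (hpb : p < b) :
    kempnerSum b (Finset.Ico (b - p) b) <
      kempnerSum b (insert 0 (Finset.Ico (b - p + 1) b)) := by
  unfold kempnerSum
  exact kempner_U_lt_T' b hb p hp hpb
end

section
/- Let b ≥ 2 be an integer and let E ⊆ {0, …, b−1} be a set of excluded digits of cardinality p with 1 ≤ p < b. Then K(b,E) ≤ K(b, {0, b−1, b−2, …, b−p+1}), with equality if and only if E = {0, b−1, b−2, …, b−p+1}. -/
open MeasureTheory Real ENNReal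

namespace KAux

variable (b : ℕ)

def P (A : Finset ℕ) (n : ℕ) : Prop := n ≠ 0 ∧ ∀ d ∈ Nat.digits b n, d ∈ A

instance (A : Finset ℕ) : DecidablePred (P b A) := fun n => by unfold P; infer_instance

def D (A : Finset ℕ) (x : ℕ) : ℕ := ((Finset.range x).filter (P b A)).card

def cdiv (x d : ℕ) : ℕ := (x - d + (b-1)) / b

variable {b}

lemma D_mono (A : Finset ℕ) : Monotone (D b A) := fun x y hxy =>
  Finset.card_le_card (Finset.filter_subset_filter _ (by simpa using hxy))

lemma lt_cdiv (hb : 2 ≤ b) {x d q : ℕ} : q < cdiv b x d ↔ b * q + d < x := by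
  unfold cdiv
  rw [Nat.lt_iff_add_one_le, Nat.le_div_iff_mul_le (show 0 < b by omega),
    show (q+1) * b = b*q + b by ring]
  generalize b * q = t
  omega

lemma cdiv_anti (hb : 2 ≤ b) {x d e : ℕ} (h : e ≤ d) : cdiv b x d ≤ cdiv b x e :=
  Nat.div_le_div_right (by omega)

lemma cdiv_pos_iff (hb : 2 ≤ b) {x d : ℕ} : 1 ≤ cdiv b x d ↔ d < x := by
  have := lt_cdiv (x := x) (d := d) (q := 0) hb
  simp only [Nat.mul_zero, Nat.zero_add] at this
  omega

lemma cdiv_lt_self (hb : 2 ≤ b) {x d : ℕ} (hx : 2 ≤ x) : cdiv b x d < x := by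
  unfold cdiv
  have h1 : x - d + (b - 1) ≤ x + b - 1 := by omega
  have hle := Nat.div_le_div_right (c := b) h1
  have h2 : (x + b - 1) / b < x := by
    rw [Nat.div_lt_iff_lt_mul (by omega)]
    obtain ⟨x', rfl⟩ : ∃ x', x = x' + 2 := ⟨x - 2, by omega⟩
    obtain ⟨b', rfl⟩ : ∃ b', b = b' + 2 := ⟨b - 2, by omega⟩
    ring_nf
    generalize x' * b' = t
    omega
  omega

end KAux

namespace KAux

variable {b : ℕ}

lemma mul_add_mod' (hb0 : 0 < b) {q d : ℕ} (hd : d < b) : (b*q+d) % b = d := by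
  rw [Nat.add_comm, Nat.add_mul_mod_self_left, Nat.mod_eq_of_lt hd]

lemma mul_add_div' (hb0 : 0 < b) {q d : ℕ} (hd : d < b) : (b*q+d) / b = q := by
  rw [Nat.add_comm, Nat.add_mul_div_left _ _ hb0, Nat.div_eq_of_lt hd, Nat.zero_add]

lemma filter_all_card (A : Finset ℕ) (y : ℕ) :
    ((Finset.range y).filter (fun q => ∀ d ∈ Nat.digits b q, d ∈ A)).card
      = D b A y + if 1 ≤ y then 1 else 0 := by
  have hset : (Finset.range y).filter (fun q => ∀ d ∈ Nat.digits b q, d ∈ A)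
      = ((Finset.range y).filter (P b A)) ∪ ((Finset.range y).filter (· = 0)) := by
    ext q
    by_cases hq : q = 0
    · subst hq
      simp [P]
      split_ifs with h <;> simp [h]
    · simp [P, hq]
      split_ifs with h <;> simp [hq]
  rw [hset, Finset.card_union_of_disjoint]
  · congr 1
    rw [Finset.filter_eq']
    rcases Nat.lt_or_ge 0 y with h | h
    · rw [if_pos (Finset.mem_range.2 h), if_pos (by omega)]; simp
    · rw [if_neg (by simp [Finset.mem_range]; omega), if_neg (by omega)]; simp
  · rw [Finset.disjoint_filter]
    rintro q _ ⟨hq, _⟩ rfl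
    exact hq rfl

lemma D_rec (hb : 2 ≤ b) (A : Finset ℕ) (hA : A ⊆ Finset.range b) (x : ℕ) :
    D b A x = ∑ d ∈ A, (D b A (cdiv b x d) + if d ≠ 0 ∧ d < x then 1 else 0) := by
  classical
  set T : ℕ → Finset ℕ := fun d =>
    ((Finset.range (cdiv b x d)).filter
      (fun q => (∀ e ∈ Nat.digits b q, e ∈ A) ∧ (d ≠ 0 ∨ q ≠ 0))).image (fun q => b*q + d)
    with hT
  have hb0 : 0 < b := by omega
  have hstep : (Finset.range x).filter (P b A) = A.biUnion T := by
    ext n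
    simp only [Finset.mem_filter, Finset.mem_range, Finset.mem_biUnion, hT,
      Finset.mem_image, P]
    constructor
    · rintro ⟨hnx, hn0, hdig⟩
      have hdigs : Nat.digits b n = n % b :: Nat.digits b (n / b) :=
        Nat.digits_def' (by omega) (Nat.pos_of_ne_zero hn0)
      have hdm := Nat.div_add_mod n b
      have hmem : n % b ∈ A := hdig _ (by rw [hdigs]; exact List.mem_cons_self)
      have hq : n / b < cdiv b x (n % b) := by
        rw [lt_cdiv hb, Nat.div_add_mod n b]; exact hnx
      have htail : ∀ e ∈ Nat.digits b (n / b), e ∈ A := fun e he =>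
        hdig _ (by rw [hdigs]; exact List.mem_cons_of_mem _ he)
      have hor : n % b ≠ 0 ∨ n / b ≠ 0 := by
        by_contra hcon
        push_neg at hcon
        obtain ⟨h1, h2⟩ := hcon
        rw [h1, h2, Nat.mul_zero] at hdm
        exact hn0 (by omega)
      exact ⟨n % b, hmem, n / b, ⟨⟨hq, htail, hor⟩, hdm⟩⟩
    · rintro ⟨d, hdA, q, ⟨⟨hq, hqdig, hdq0⟩, rfl⟩⟩
      have hdb : d < b := Finset.mem_range.1 (hA hdA)
      have hn0 : b * q + d ≠ 0 := by
        rcases hdq0 with h | h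
        · omega
        · have : 0 < q := Nat.pos_of_ne_zero h; positivity
      refine ⟨(lt_cdiv hb).1 hq, hn0, ?_⟩
      have hdigs : Nat.digits b (b*q+d) = d :: Nat.digits b q := by
        rw [Nat.digits_def' (show 1 < b by omega) (Nat.pos_of_ne_zero hn0),
          mul_add_mod' hb0 hdb, mul_add_div' hb0 hdb]
      rw [hdigs]
      intro e he
      rcases List.mem_cons.1 he with rfl | he
      · exact hdA
      · exact hqdig _ he
  have hdisj : ∀ d ∈ A, ∀ d' ∈ A, d ≠ d' → Disjoint (T d) (T d') := by
    intro d hd d' hd' hne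
    rw [Finset.disjoint_left]
    rintro n hn hn'
    simp only [hT, Finset.mem_image, Finset.mem_filter] at hn hn'
    obtain ⟨q, _, rfl⟩ := hn
    obtain ⟨q', _, he⟩ := hn'
    have hdb : d < b := Finset.mem_range.1 (hA hd)
    have hdb' : d' < b := Finset.mem_range.1 (hA hd')
    refine hne ?_
    have e1 : (b*q+d) % b = d := mul_add_mod' hb0 hdb
    have e2 : (b*q'+d') % b = d' := mul_add_mod' hb0 hdb'
    rw [← e1, ← he, e2]
  unfold D
  rw [hstep, Finset.card_biUnion hdisj]
  refine Finset.sum_congr rfl (fun d hd => ?_)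
  rw [hT]
  rw [Finset.card_image_of_injective _
    (fun q q' h => Nat.eq_of_mul_eq_mul_left hb0 (by omega))]
  by_cases hd0 : d = 0
  · subst hd0
    have : ((Finset.range (cdiv b x 0)).filter
        (fun q => (∀ e ∈ Nat.digits b q, e ∈ A) ∧ ((0:ℕ) ≠ 0 ∨ q ≠ 0)))
        = (Finset.range (cdiv b x 0)).filter (P b A) := by
      ext q; simp [P]; tauto
    simp only [this]
    simp [D]
  · have : ((Finset.range (cdiv b x d)).filter
        (fun q => (∀ e ∈ Nat.digits b q, e ∈ A) ∧ (d ≠ 0 ∨ q ≠ 0)))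
        = (Finset.range (cdiv b x d)).filter (fun q => ∀ e ∈ Nat.digits b q, e ∈ A) := by
      ext q; simp [hd0]
    rw [this, filter_all_card]
    have hiff : (1 ≤ cdiv b x d) = (d < x) := propext (cdiv_pos_iff hb)
    simp [hd0, hiff, D]

end KAux

namespace KAux

variable {b : ℕ}

lemma D_zero_of_le_one (A : Finset ℕ) {x : ℕ} (hx : x ≤ 1) : D b A x = 0 := by
  unfold D
  rw [Finset.card_eq_zero, Finset.filter_eq_empty_iff]
  intro n hn
  rw [Finset.mem_range] at hn
  have : n = 0 := by omega
  subst this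
  exact fun h => h.1 rfl

lemma D_succ_le (A : Finset ℕ) (y : ℕ) : D b A y ≤ D b A (y-1) + 1 := by
  rcases Nat.eq_zero_or_pos y with rfl | hy
  · simp [D_zero_of_le_one A (le_refl 0 |>.trans (by omega))]
  · unfold D
    have hsub : (Finset.range y).filter (P b A) ⊆
        insert (y-1) ((Finset.range (y-1)).filter (P b A)) := by
      intro n hn
      rw [Finset.mem_filter, Finset.mem_range] at hn
      rcases Nat.lt_or_ge n (y-1) with h | h
      · exact Finset.mem_insert_of_mem (Finset.mem_filter.2 ⟨Finset.mem_range.2 h, hn.2⟩)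
      · have : n = y - 1 := by omega
        subst this
        exact Finset.mem_insert_self _ _
    calc ((Finset.range y).filter (P b A)).card
        ≤ (insert (y-1) ((Finset.range (y-1)).filter (P b A))).card := Finset.card_le_card hsub
      _ ≤ ((Finset.range (y-1)).filter (P b A)).card + 1 := Finset.card_insert_le _ _

lemma count_le (hb : 2 ≤ b) (A : Finset ℕ) (hA : A ⊆ Finset.range b) {a : ℕ}
    (hcard : A.card = a) (ha : 1 ≤ a) (hab : a < b) (x : ℕ) :
    D b A x ≤ D b (Finset.Icc 1 a) x := by
  induction x using Nat.strong_induction_on with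
  | _ x IH =>
  rcases Nat.lt_or_ge x 2 with hx2 | hx2
  · rw [D_zero_of_le_one A (by omega)]
    exact Nat.zero_le _
  -- setup
  have hIcc : Finset.Icc 1 a ⊆ Finset.range b := by
    intro d hd
    rw [Finset.mem_Icc] at hd
    rw [Finset.mem_range]
    omega
  set g : Fin a → ℕ := fun i => ((A.orderIsoOfFin hcard) i : ℕ) with hg
  have hgmono : StrictMono g := fun i j hij => by
    exact_mod_cast (A.orderIsoOfFin hcard).strictMono hij
  have hginj : Function.Injective g := hgmono.injective
  have hgmem : ∀ i, g i ∈ A := fun i => ((A.orderIsoOfFin hcard) i).2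
  have hgle0 : ∀ k (h : k < a), k ≤ g ⟨k, h⟩ := by
    intro k
    induction k with
    | zero => intro h; exact Nat.zero_le _
    | succ j ih =>
        intro h
        have hj : j < a := by omega
        have h1 : g ⟨j, hj⟩ < g ⟨j+1, h⟩ := hgmono (by simp [Fin.lt_def])
        have h2 := ih hj
        omega
  have hgle : ∀ i : Fin a, (i : ℕ) ≤ g i := fun i => by
    have := hgle0 i.val i.2
    simpa [Fin.eta] using this
  have himage : Finset.image g Finset.univ = A := by
    apply Finset.eq_of_subset_of_card_le
    · intro d hd
      obtain ⟨i, _, rfl⟩ := Finset.mem_image.1 hd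
      exact hgmem i
    · rw [Finset.card_image_of_injective _ hginj, Finset.card_univ, Fintype.card_fin, hcard]
  have himage2 : Finset.image (fun i : Fin a => (i : ℕ) + 1) Finset.univ = Finset.Icc 1 a := by
    apply Finset.eq_of_subset_of_card_le
    · intro d hd
      obtain ⟨i, _, rfl⟩ := Finset.mem_image.1 hd
      rw [Finset.mem_Icc]
      exact ⟨by omega, by have := i.2; omega⟩
    · rw [Finset.card_image_of_injective _
        (fun i j h => Fin.ext (show (i : ℕ) = (j : ℕ) by omega)),
        Finset.card_univ, Fintype.card_fin, Nat.card_Icc]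
      omega
  rw [D_rec hb A hA x, D_rec hb _ hIcc x, ← himage, ← himage2,
    Finset.sum_image (fun i _ j _ h => hginj h),
    Finset.sum_image (fun i _ j _ h => Fin.ext (show (i : ℕ) = (j : ℕ) by omega))]
  simp only [himage, himage2]
  have key : ∀ d e : ℕ, 1 ≤ e → e ≤ d →
      (D b A (cdiv b x d) + if d ≠ 0 ∧ d < x then 1 else 0)
        ≤ (D b (Finset.Icc 1 a) (cdiv b x e) + if e ≠ 0 ∧ e < x then 1 else 0) := by
    intro d e he1 hed
    apply Nat.add_le_add
    · exact (IH (cdiv b x d) (cdiv_lt_self hb hx2)).trans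
        (D_mono _ (cdiv_anti hb hed))
    · split_ifs with h1 h2
      · exact le_refl 1
      · exact absurd ⟨by omega, by omega⟩ h2
      · exact Nat.zero_le _
      · exact Nat.zero_le _
  by_cases h0A : (0 : ℕ) ∈ A
  · -- zero is an allowed digit
    have ha' : 0 < a := ha
    obtain ⟨i0, _, hi0⟩ := Finset.mem_image.1 (himage ▸ h0A)
    have hg0 : g ⟨0, ha'⟩ = 0 := by
      have h1 : g ⟨0, ha'⟩ ≤ g i0 := hgmono.monotone (by simp [Fin.le_def])
      omega
    obtain ⟨a', rfl⟩ : ∃ a', a = a' + 1 := ⟨a - 1, by omega⟩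
    rw [Fin.sum_univ_succ (fun i => D b A (cdiv b x (g i)) + if g i ≠ 0 ∧ g i < x then 1 else 0),
      Fin.sum_univ_castSucc (fun i : Fin (a'+1) =>
        D b (Finset.Icc 1 (a'+1)) (cdiv b x ((i:ℕ)+1)) + if (i:ℕ)+1 ≠ 0 ∧ (i:ℕ)+1 < x then 1 else 0)]
    have hterm : ∀ i : Fin a',
        (D b A (cdiv b x (g i.succ)) + if g i.succ ≠ 0 ∧ g i.succ < x then 1 else 0)
          ≤ (D b (Finset.Icc 1 (a'+1)) (cdiv b x (((Fin.castSucc i : Fin (a'+1)) : ℕ)+1))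
              + if ((Fin.castSucc i : Fin (a'+1)) : ℕ)+1 ≠ 0 ∧ ((Fin.castSucc i : Fin (a'+1)) : ℕ)+1 < x then 1 else 0) := by
      intro i
      apply key
      · omega
      · have h1 := hgle i.succ
        simp only [Fin.val_succ] at h1
        simpa using h1
    have hspec :
        (D b A (cdiv b x (g (0 : Fin (a'+1)))) + if g (0 : Fin (a'+1)) ≠ 0 ∧ g (0 : Fin (a'+1)) < x then 1 else 0)
          ≤ (D b (Finset.Icc 1 (a'+1)) (cdiv b x (((Fin.last a' : Fin (a'+1)) : ℕ)+1))
              + if ((Fin.last a' : Fin (a'+1)) : ℕ)+1 ≠ 0 ∧ ((Fin.last a' : Fin (a'+1)) : ℕ)+1 < x then 1 else 0) := by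
      have hg0' : g (0 : Fin (a'+1)) = 0 := hg0
      rw [hg0']
      have hzero : (if (0:ℕ) ≠ 0 ∧ (0:ℕ) < x then 1 else 0) = 0 := by simp
      rw [hzero, Nat.add_zero, Fin.val_last]
      by_cases hax : a' + 1 < x
      · have hy : cdiv b x 0 = (x-1)/b + 1 := by
          unfold cdiv
          rw [show x - 0 + (b-1) = (x-1) + b by omega, Nat.add_div_right _ (by omega)]
        have h1 : D b A (cdiv b x 0) ≤ D b A ((x-1)/b) + 1 := by
          rw [hy]
          have := D_succ_le (b := b) A ((x-1)/b + 1)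
          simpa using this
        have h2 : D b A ((x-1)/b) ≤ D b (Finset.Icc 1 (a'+1)) ((x-1)/b) := by
          apply IH
          have : (x-1)/b ≤ x - 1 := Nat.div_le_self _ _
          omega
        have h3 : D b (Finset.Icc 1 (a'+1)) ((x-1)/b)
            ≤ D b (Finset.Icc 1 (a'+1)) (cdiv b x (a'+1)) := by
          apply D_mono
          unfold cdiv
          apply Nat.div_le_div_right
          omega
        rw [if_pos ⟨by omega, hax⟩]
        omega
      · have hc1 : cdiv b x 0 ≤ 1 := by
          unfold cdiv
          rw [Nat.div_le_iff_le_mul_add_pred (by omega)]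
          omega
        have hD0 : D b A (cdiv b x 0) = 0 := by
          have h1 := D_mono (b := b) A hc1
          rw [D_zero_of_le_one A (le_refl 1)] at h1
          omega
        rw [hD0]
        exact Nat.zero_le _
    calc (D b A (cdiv b x (g (0 : Fin (a'+1)))) + if g (0 : Fin (a'+1)) ≠ 0 ∧ g (0 : Fin (a'+1)) < x then 1 else 0)
          + ∑ i : Fin a', (D b A (cdiv b x (g i.succ)) + if g i.succ ≠ 0 ∧ g i.succ < x then 1 else 0)
        ≤ (D b (Finset.Icc 1 (a'+1)) (cdiv b x (((Fin.last a' : Fin (a'+1)) : ℕ)+1))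
              + if ((Fin.last a' : Fin (a'+1)) : ℕ)+1 ≠ 0 ∧ ((Fin.last a' : Fin (a'+1)) : ℕ)+1 < x then 1 else 0)
          + ∑ i : Fin a', (D b (Finset.Icc 1 (a'+1)) (cdiv b x (((Fin.castSucc i : Fin (a'+1)) : ℕ)+1))
              + if ((Fin.castSucc i : Fin (a'+1)) : ℕ)+1 ≠ 0 ∧ ((Fin.castSucc i : Fin (a'+1)) : ℕ)+1 < x then 1 else 0) :=
          Nat.add_le_add hspec (Finset.sum_le_sum (fun i _ => hterm i))
      _ = _ := Nat.add_comm _ _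
  · -- zero is excluded
    apply Finset.sum_le_sum
    intro i _
    apply key
    · omega
    · -- (i:ℕ)+1 ≤ g i
      have hstep : ∀ k (h : k < a), k + 1 ≤ g ⟨k, h⟩ := by
        intro k
        induction k with
        | zero =>
            intro h
            have := hgmem ⟨0, h⟩
            rcases Nat.eq_zero_or_pos (g ⟨0, h⟩) with h0 | h0
            · rw [h0] at this; exact absurd this h0A
            · omega
        | succ j ih =>
            intro h
            have hj : j < a := by omega
            have h1 : g ⟨j, hj⟩ < g ⟨j+1, h⟩ := hgmono (by simp [Fin.lt_def])
            have h2 := ih hj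
            omega
      have := hstep i.val i.2
      simpa [Fin.eta] using this

end KAux

namespace KAux

variable {b : ℕ}

lemma digits_single (hb : 2 ≤ b) {n : ℕ} (h1 : 1 ≤ n) (h2 : n < b) :
    Nat.digits b n = [n] := by
  rw [Nat.digits_def' (show 1 < b by omega) (by omega), Nat.mod_eq_of_lt h2,
    Nat.div_eq_of_lt h2]
  simp

lemma D_small (hb : 2 ≤ b) (A : Finset ℕ) {a : ℕ} (hab : a < b) :
    D b A (a+1) = (A ∩ Finset.Icc 1 a).card := by
  unfold D
  rw [← Finset.card_map ⟨id, Function.injective_id⟩]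
  congr 1
  ext n
  simp only [Finset.mem_filter, Finset.mem_range, Finset.mem_map,
    Function.Embedding.coeFn_mk, id_eq, exists_eq_right, Finset.mem_inter, Finset.mem_Icc, P]
  constructor
  · rintro ⟨hlt, hn0, hdig⟩
    have h1 : 1 ≤ n := Nat.pos_of_ne_zero hn0
    have hd := digits_single hb h1 (by omega)
    have := hdig n (by rw [hd]; exact List.mem_cons_self)
    exact ⟨this, h1, by omega⟩
  · rintro ⟨hnA, h1, h2⟩
    have hd := digits_single hb h1 (by omega)
    refine ⟨by omega, by omega, ?_⟩
    rw [hd]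
    intro d hd'
    rcases List.mem_singleton.1 hd' with rfl
    exact hnA

lemma count_strict (hb : 2 ≤ b) (A : Finset ℕ) {a : ℕ}
    (hcard : A.card = a) (ha : 1 ≤ a) (hab : a < b) (hne : A ≠ Finset.Icc 1 a) :
    D b A (a+1) < D b (Finset.Icc 1 a) (a+1) := by
  rw [D_small hb A hab, D_small hb _ hab, Finset.inter_self, Nat.card_Icc]
  have hnsub : ¬ A ⊆ Finset.Icc 1 a := fun hsub =>
    hne (Finset.eq_of_subset_of_card_le hsub (by rw [hcard, Nat.card_Icc]; omega))
  obtain ⟨e, heA, heI⟩ := Finset.not_subset.1 hnsub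
  have hsub2 : A ∩ Finset.Icc 1 a ⊆ A.erase e := fun d hd =>
    Finset.mem_erase.2 ⟨fun h => heI (h ▸ (Finset.mem_inter.1 hd).2), (Finset.mem_inter.1 hd).1⟩
  calc (A ∩ Finset.Icc 1 a).card ≤ (A.erase e).card := Finset.card_le_card hsub2
    _ = a - 1 := by rw [Finset.card_erase_of_mem heA, hcard]
    _ < a + 1 - 1 := by omega

end KAux

namespace KAux

open ENNReal Filter

variable {b : ℕ}

/-- the summand `1/(y(y+1))`. -/
noncomputable def c (y : ℕ) : ℝ≥0∞ := ((y : ℝ≥0∞) * ((y : ℝ≥0∞) + 1))⁻¹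

lemma hasSum_telescope (n : ℕ) (hn : 1 ≤ n) :
    HasSum (fun y : ℕ => if n ≤ y then (((y:ℝ)) * ((y:ℝ)+1))⁻¹ else 0) ((n:ℝ)⁻¹) := by
  set f : ℕ → ℝ := fun y => if n ≤ y then (((y:ℝ)) * ((y:ℝ)+1))⁻¹ else 0 with hf
  have hnonneg : ∀ y, 0 ≤ f y := by
    intro y
    rw [hf]
    dsimp only
    split_ifs with h
    · positivity
    · exact le_refl 0
  rw [hasSum_iff_tendsto_nat_of_nonneg hnonneg]
  -- partial sums: for N ≥ n, ∑_{y<N} f y = 1/n - 1/N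
  have hps : ∀ N, n ≤ N → ∑ y ∈ Finset.range N, f y = (n:ℝ)⁻¹ - (N:ℝ)⁻¹ := by
    intro N hN
    induction N with
    | zero => omega
    | succ M ihM =>
        rcases Nat.lt_or_ge M n with hM | hM
        · -- M < n ≤ M + 1, so N = n
          have hMn : n = M + 1 := by omega
          rw [Finset.sum_range_succ]
          have hz : ∑ y ∈ Finset.range M, f y = 0 := by
            apply Finset.sum_eq_zero
            intro y hy
            rw [Finset.mem_range] at hy
            rw [hf]
            dsimp only
            rw [if_neg (by omega)]
          have hfM : f M = 0 := by
            rw [hf]; dsimp only; rw [if_neg (by omega)]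
          rw [hz, hfM, hMn]
          push_cast
          ring
        · rw [Finset.sum_range_succ, ihM hM, hf]
          dsimp only
          rw [if_pos hM]
          have h1 : ((M:ℝ)) ≠ 0 := by
            have : 1 ≤ M := by omega
            positivity
          have h2 : ((M:ℝ)+1) ≠ 0 := by positivity
          push_cast
          field_simp
          ring
  have htend : Tendsto (fun N : ℕ => (n:ℝ)⁻¹ - (N:ℝ)⁻¹) atTop (nhds ((n:ℝ)⁻¹)) := by
    have h1 : Tendsto (fun N : ℕ => (N:ℝ)⁻¹) atTop (nhds 0) :=
      tendsto_inv_atTop_zero.comp tendsto_natCast_atTop_atTop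
    have := Tendsto.sub (tendsto_const_nhds (x := (n:ℝ)⁻¹) (f := atTop)) h1
    simpa using this
  apply Tendsto.congr' _ htend
  rw [Filter.eventuallyEq_iff_exists_mem]
  exact ⟨Set.Ici n, Filter.mem_atTop n, fun N hN => (hps N hN).symm⟩

lemma inv_nat_eq_tsum {n : ℕ} (hn : 1 ≤ n) :
    ((n : ℝ≥0∞))⁻¹ = ∑' y : ℕ, if n ≤ y then c y else 0 := by
  set f : ℕ → ℝ := fun y => if n ≤ y then (((y:ℝ)) * ((y:ℝ)+1))⁻¹ else 0 with hf
  have hnonneg : ∀ y, 0 ≤ f y := by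
    intro y; rw [hf]; dsimp only; split_ifs with h
    · positivity
    · exact le_refl 0
  have hs := hasSum_telescope n hn
  have hsummable : Summable f := ⟨_, hs⟩
  have htsum : ∑' y, f y = (n:ℝ)⁻¹ := hs.tsum_eq
  have h1 : ENNReal.ofReal ((n:ℝ)⁻¹) = ((n:ℝ≥0∞))⁻¹ := by
    rw [ENNReal.ofReal_inv_of_pos (by positivity), ENNReal.ofReal_natCast]
  rw [← h1, ← htsum, ENNReal.ofReal_tsum_of_nonneg hnonneg hsummable]
  apply tsum_congr
  intro y
  rw [hf]
  dsimp only
  split_ifs with h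
  · have hy : 1 ≤ y := by omega
    rw [c]
    rw [ENNReal.ofReal_inv_of_pos (by positivity), ENNReal.ofReal_mul (by positivity),
      ENNReal.ofReal_natCast, ENNReal.ofReal_add (by positivity) (by norm_num),
      ENNReal.ofReal_natCast, ENNReal.ofReal_one]
  · simp

end KAux

namespace KAux

open ENNReal

variable {b : ℕ}

noncomputable def kap (b : ℕ) (A : Finset ℕ) : ℝ≥0∞ :=
  ∑' n : ℕ, if P b A n then ((n : ℝ≥0∞))⁻¹ else 0

lemma kap_eq (A : Finset ℕ) :
    kap b A = ∑' y : ℕ, (D b A (y+1) : ℝ≥0∞) * c y := by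
  unfold kap
  have hpt : ∀ n : ℕ, (if P b A n then ((n : ℝ≥0∞))⁻¹ else 0)
      = ∑' y : ℕ, (if P b A n ∧ n ≤ y then c y else 0) := by
    intro n
    by_cases hP : P b A n
    · rw [if_pos hP]
      have hn1 : 1 ≤ n := Nat.pos_of_ne_zero hP.1
      rw [inv_nat_eq_tsum hn1]
      apply tsum_congr
      intro y
      by_cases hy : n ≤ y
      · rw [if_pos hy, if_pos ⟨hP, hy⟩]
      · rw [if_neg hy, if_neg (fun h => hy h.2)]
    · simp only [hP, if_false, false_and, tsum_zero]
  rw [tsum_congr hpt, ENNReal.tsum_comm]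
  apply tsum_congr
  intro y
  have hsup : ∀ n ∉ (Finset.range (y+1)).filter (P b A),
      (if P b A n ∧ n ≤ y then c y else 0) = 0 := by
    intro n hn
    rw [if_neg]
    rintro ⟨h1, h2⟩
    exact hn (Finset.mem_filter.2 ⟨Finset.mem_range.2 (by omega), h1⟩)
  rw [tsum_eq_sum hsup]
  have hterm : ∀ n ∈ (Finset.range (y+1)).filter (P b A),
      (if P b A n ∧ n ≤ y then c y else 0) = c y := by
    intro n hn
    rw [Finset.mem_filter, Finset.mem_range] at hn
    exact if_pos ⟨hn.2, by omega⟩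
  rw [Finset.sum_congr rfl hterm, Finset.sum_const, nsmul_eq_mul]
  rfl

end KAux

namespace KAux

open ENNReal

variable {b : ℕ}

lemma Dstar_pow_le (hb : 2 ≤ b) {a : ℕ} (ha : 1 ≤ a) (hab : a < b) :
    ∀ m, D b (Finset.Icc 1 a) (b ^ m) ≤ m * a ^ m := by
  intro m
  induction m with
  | zero =>
      rw [pow_zero, D_zero_of_le_one _ (le_refl 1)]
      exact Nat.zero_le _
  | succ m ih =>
      set S := Finset.Icc 1 a with hS
      have hb0 : 0 < b := by omega
      have hkey : D b S (b^(m+1)) ≤ a * (D b S (b^m) + 1) := by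
        have hcardle : ((Finset.range (b^(m+1))).filter (P b S)).card
            ≤ (S ×ˢ insert 0 ((Finset.range (b^m)).filter (P b S))).card := by
          apply Finset.card_le_card_of_injOn (fun n => (n % b, n / b))
          · intro n hn
            rw [Finset.mem_coe, Finset.mem_filter, Finset.mem_range] at hn
            obtain ⟨hlt, hn0, hdig⟩ := hn
            have hdigs : Nat.digits b n = n % b :: Nat.digits b (n / b) :=
              Nat.digits_def' (by omega) (Nat.pos_of_ne_zero hn0)
            simp only [Finset.mem_coe, Finset.mem_product]
            constructor
            · exact hdig _ (by rw [hdigs]; exact List.mem_cons_self)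
            · rcases Nat.eq_zero_or_pos (n / b) with h0 | h0
              · rw [h0]; exact Finset.mem_insert_self _ _
              · apply Finset.mem_insert_of_mem
                rw [Finset.mem_filter, Finset.mem_range]
                refine ⟨?_, by omega, fun e he => hdig _ (by rw [hdigs]; exact List.mem_cons_of_mem _ he)⟩
                rw [Nat.div_lt_iff_lt_mul hb0, ← pow_succ]
                exact hlt
          · intro n hn n' hn' hee
            simp only [Prod.mk.injEq] at hee
            obtain ⟨e1, e2⟩ := hee
            have h1 := Nat.div_add_mod n b
            have h2 := Nat.div_add_mod n' b
            have e3 : b * (n / b) = b * (n' / b) := by rw [e2]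
            omega
        rw [Finset.card_product] at hcardle
        have h3 : (insert 0 ((Finset.range (b^m)).filter (P b S))).card
            ≤ D b S (b^m) + 1 := Finset.card_insert_le _ _
        calc D b S (b^(m+1)) ≤ S.card * (insert 0 ((Finset.range (b^m)).filter (P b S))).card := hcardle
          _ ≤ a * (D b S (b^m) + 1) := by
              apply Nat.mul_le_mul _ h3
              rw [hS, Nat.card_Icc]; omega
      calc D b S (b^(m+1)) ≤ a * (D b S (b^m) + 1) := hkey
        _ ≤ a * (m * a^m + 1) := Nat.mul_le_mul_left a (by omega)
        _ = m * a^(m+1) + a := by ring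
        _ ≤ (m+1) * a^(m+1) := by
            have : a ≤ a^(m+1) := Nat.le_self_pow (by omega) a
            nlinarith

lemma Dstar_le_log (hb : 2 ≤ b) {a : ℕ} (ha : 1 ≤ a) (hab : a < b) (y : ℕ) :
    D b (Finset.Icc 1 a) (y+1) ≤ (Nat.log b y + 1) * a ^ (Nat.log b y + 1) := by
  have h1 : y < b ^ (Nat.log b y + 1) := Nat.lt_pow_succ_log_self (by omega) y
  exact (D_mono _ (by omega)).trans (Dstar_pow_le hb ha hab (Nat.log b y + 1))

lemma natcast_div_ofReal (N M : ℕ) (hM : 0 < M) :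
    (N : ℝ≥0∞) * ((M : ℝ≥0∞))⁻¹ = ENNReal.ofReal ((N : ℝ) / (M : ℝ)) := by
  rw [ENNReal.ofReal_div_of_pos (by exact_mod_cast hM), ENNReal.ofReal_natCast,
    ENNReal.ofReal_natCast, div_eq_mul_inv]

lemma kapstar_ne_top (hb : 2 ≤ b) {a : ℕ} (ha : 1 ≤ a) (hab : a < b) :
    kap b (Finset.Icc 1 a) ≠ ⊤ := by
  rw [kap_eq]
  set S := Finset.Icc 1 a with hS
  set t : ℕ → ℝ≥0∞ := fun y => (D b S (y+1) : ℝ≥0∞) * c y with ht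
  have ht0 : t 0 = 0 := by
    rw [ht]
    dsimp only
    rw [D_zero_of_le_one _ (le_refl 1)]
    simp
  -- partition by Nat.log
  have hpt : ∀ y, t y = ∑' l : ℕ, (if y ∈ Finset.Ico (b^l) (b^(l+1)) then t y else 0) := by
    intro y
    by_cases hy : y = 0
    · subst hy
      rw [ht0]
      symm
      apply ENNReal.tsum_eq_zero.2
      intro l
      rw [if_neg]
      rw [Finset.mem_Ico]
      rintro ⟨h1, _⟩
      have := pow_pos (show 0 < b by omega) l
      omega
    · symm
      have hzero : ∀ l, l ≠ Nat.log b y →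
          (if y ∈ Finset.Ico (b^l) (b^(l+1)) then t y else 0) = 0 := by
        intro l hl
        rw [if_neg]
        rw [Finset.mem_Ico]
        rintro ⟨h1, h2⟩
        exact hl (Nat.log_eq_of_pow_le_of_lt_pow h1 h2).symm
      rw [tsum_eq_single (Nat.log b y) hzero, if_pos (Finset.mem_Ico.2
        ⟨Nat.pow_log_le_self b hy, Nat.lt_pow_succ_log_self (by omega) y⟩)]
  rw [tsum_congr hpt, ENNReal.tsum_comm]
  -- block bound
  have hblock : ∀ l : ℕ,
      (∑' y : ℕ, if y ∈ Finset.Ico (b^l) (b^(l+1)) then t y else 0)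
        ≤ ENNReal.ofReal (((b^(l+1) * ((l+1) * a^(l+1)) : ℕ) : ℝ) / ((b^l * b^l : ℕ) : ℝ)) := by
    intro l
    rw [tsum_eq_sum (s := Finset.Ico (b^l) (b^(l+1))) (fun y hy => if_neg hy)]
    have hterm : ∀ y ∈ Finset.Ico (b^l) (b^(l+1)),
        (if y ∈ Finset.Ico (b^l) (b^(l+1)) then t y else 0)
          ≤ (((l+1) * a^(l+1) : ℕ) : ℝ≥0∞) * (((b^l * b^l : ℕ) : ℝ≥0∞))⁻¹ := by
      intro y hy
      rw [if_pos hy]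
      rw [Finset.mem_Ico] at hy
      rw [ht]
      dsimp only
      apply mul_le_mul'
      · have h1 : D b S (y+1) ≤ D b S (b^(l+1)) := D_mono _ (by omega)
        have h2 := Dstar_pow_le hb ha hab (l+1)
        exact_mod_cast h1.trans h2
      · rw [c, ENNReal.inv_le_inv]
        push_cast
        have hyc : ((b:ℝ≥0∞))^l ≤ (y : ℝ≥0∞) := by exact_mod_cast Nat.cast_le.2 hy.1
        have hyc2 : ((b:ℝ≥0∞))^l ≤ (y : ℝ≥0∞) + 1 := le_trans hyc le_self_add
        exact mul_le_mul' hyc hyc2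
    calc (∑ y ∈ Finset.Ico (b^l) (b^(l+1)),
            if y ∈ Finset.Ico (b^l) (b^(l+1)) then t y else 0)
        ≤ ∑ y ∈ Finset.Ico (b^l) (b^(l+1)),
            ((((l+1) * a^(l+1) : ℕ) : ℝ≥0∞) * (((b^l * b^l : ℕ) : ℝ≥0∞))⁻¹) :=
          Finset.sum_le_sum hterm
      _ = ((Finset.Ico (b^l) (b^(l+1))).card : ℝ≥0∞)
            * ((((l+1) * a^(l+1) : ℕ) : ℝ≥0∞) * (((b^l * b^l : ℕ) : ℝ≥0∞))⁻¹) := by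
          rw [Finset.sum_const, nsmul_eq_mul]
      _ ≤ ((b^(l+1) : ℕ) : ℝ≥0∞)
            * ((((l+1) * a^(l+1) : ℕ) : ℝ≥0∞) * (((b^l * b^l : ℕ) : ℝ≥0∞))⁻¹) := by
          apply mul_le_mul_left
          rw [Nat.card_Ico]
          exact_mod_cast Nat.cast_le.2 (Nat.sub_le _ _)
      _ = ENNReal.ofReal (((b^(l+1) * ((l+1) * a^(l+1)) : ℕ) : ℝ) / ((b^l * b^l : ℕ) : ℝ)) := by
          rw [← mul_assoc, ← Nat.cast_mul, natcast_div_ofReal]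
          positivity
  -- summability of the real majorant
  have hrsum : Summable (fun l : ℕ => ((b^(l+1) * ((l+1) * a^(l+1)) : ℕ) : ℝ) / ((b^l * b^l : ℕ) : ℝ)) := by
    have hb0 : (0:ℝ) < b := by positivity
    have hr0 : (0:ℝ) ≤ (a:ℝ)/(b:ℝ) := by positivity
    have hr1 : (a:ℝ)/(b:ℝ) < 1 := by
      rw [div_lt_one hb0]
      exact_mod_cast hab
    have hsum1 : Summable (fun l : ℕ => ((l:ℝ)+1) * ((a:ℝ)/(b:ℝ))^l) := by
      have h1 : Summable (fun l : ℕ => (l:ℝ)^1 * ((a:ℝ)/(b:ℝ))^l) :=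
        summable_pow_mul_geometric_of_norm_lt_one 1 (by rw [Real.norm_eq_abs, abs_of_nonneg hr0]; exact hr1)
      have h2 : Summable (fun l : ℕ => ((a:ℝ)/(b:ℝ))^l) := summable_geometric_of_lt_one hr0 hr1
      apply Summable.congr (h1.add h2)
      intro l
      ring
    apply Summable.congr (hsum1.mul_left ((a:ℝ) * b))
    intro l
    push_cast
    rw [div_pow]
    field_simp
    ring
  have hfin : ENNReal.ofReal
      (∑' l : ℕ, ((b^(l+1) * ((l+1) * a^(l+1)) : ℕ) : ℝ) / ((b^l * b^l : ℕ) : ℝ)) ≠ ⊤ :=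
    ENNReal.ofReal_ne_top
  apply ne_top_of_le_ne_top hfin
  refine le_trans (ENNReal.tsum_le_tsum hblock) (le_of_eq ?_)
  exact (ENNReal.ofReal_tsum_of_nonneg (fun l => by positivity) hrsum).symm

end KAux

namespace KAux

open ENNReal

variable {b : ℕ}

lemma c_ne_zero {a : ℕ} : c a ≠ 0 := by
  rw [c]
  apply ENNReal.inv_ne_zero.2
  exact ENNReal.mul_ne_top (by simp) (by simp)

lemma c_ne_top {a : ℕ} (ha : 1 ≤ a) : c a ≠ ⊤ := by
  rw [c]
  apply ENNReal.inv_ne_top.2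
  apply mul_ne_zero
  · exact_mod_cast Nat.cast_ne_zero.2 (by omega)
  · intro h
    exact (by simp : ((a:ℝ≥0∞) + 1) ≠ 0) h

lemma kap_le (hb : 2 ≤ b) (A : Finset ℕ) (hA : A ⊆ Finset.range b) {a : ℕ}
    (hcard : A.card = a) (ha : 1 ≤ a) (hab : a < b) :
    kap b A ≤ kap b (Finset.Icc 1 a) := by
  rw [kap_eq, kap_eq]
  exact ENNReal.tsum_le_tsum (fun y =>
    mul_le_mul_left (Nat.cast_le.2 (count_le hb A hA hcard ha hab (y+1))) _)

lemma kap_lt (hb : 2 ≤ b) (A : Finset ℕ) (hA : A ⊆ Finset.range b) {a : ℕ}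
    (hcard : A.card = a) (ha : 1 ≤ a) (hab : a < b) (hne : A ≠ Finset.Icc 1 a) :
    kap b A < kap b (Finset.Icc 1 a) := by
  have hstar := kapstar_ne_top hb ha hab
  rw [kap_eq] at hstar ⊢
  rw [kap_eq]
  set f : ℕ → ℝ≥0∞ := fun y => (D b A (y+1) : ℝ≥0∞) * c y with hf
  set g : ℕ → ℝ≥0∞ := fun y => (D b (Finset.Icc 1 a) (y+1) : ℝ≥0∞) * c y with hg
  have hsplit : ∀ (h : ℕ → ℝ≥0∞), ∑' y, h y = h a + ∑' y, (if y = a then 0 else h y) := by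
    intro h
    rw [ENNReal.tsum_eq_add_tsum_ite a]
    congr 1
    apply tsum_congr
    intro y
    split_ifs <;> rfl
  rw [hsplit f, hsplit g]
  have hfg : ∀ y, (if y = a then 0 else f y) ≤ (if y = a then 0 else g y) := by
    intro y
    split_ifs with h
    · exact le_refl 0
    · exact mul_le_mul_left (Nat.cast_le.2 (count_le hb A hA hcard ha hab (y+1))) _
  have hgle : ∀ y, (if y = a then 0 else g y) ≤ g y := by
    intro y
    split_ifs with h
    · exact zero_le
    · exact le_refl _
  have hY : (∑' y, if y = a then 0 else g y) ≠ ⊤ :=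
    ne_top_of_le_ne_top hstar (ENNReal.tsum_le_tsum hgle)
  have hhead : f a < g a := by
    rw [hf, hg]
    dsimp only
    refine ENNReal.mul_lt_mul_left c_ne_zero (c_ne_top ha) ?_
    exact_mod_cast count_strict hb A hcard ha hab hne
  calc f a + (∑' x, if x = a then 0 else f x)
      ≤ f a + (∑' x, if x = a then 0 else g x) :=
        add_le_add_right (ENNReal.tsum_le_tsum hfg) _
    _ < g a + (∑' x, if x = a then 0 else g x) := ENNReal.add_lt_add_right hY hhead

lemma kempner_eq_toReal (hb : 2 ≤ b) (E : Finset ℕ) :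
    kempnerSum b E = (kap b (Finset.range b \ E)).toReal := by
  have hne : ∀ n : ℕ, (if P b (Finset.range b \ E) n then ((n : ℝ≥0∞))⁻¹ else 0) ≠ ⊤ := by
    intro n
    split_ifs with h
    · exact ENNReal.inv_ne_top.2 (by exact_mod_cast Nat.cast_ne_zero.2 h.1)
    · exact ENNReal.zero_ne_top
  unfold kempnerSum kap
  rw [ENNReal.tsum_toReal_eq hne]
  apply tsum_congr
  intro n
  by_cases hn : n ≠ 0 ∧ ∀ d ∈ Nat.digits b n, d ∉ E
  · rw [if_pos hn, if_pos]
    · simp [ENNReal.toReal_inv]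
    · exact ⟨hn.1, fun d hd => Finset.mem_sdiff.2
        ⟨Finset.mem_range.2 (Nat.digits_lt_base (by omega) hd), hn.2 d hd⟩⟩
  · have hP : ¬ P b (Finset.range b \ E) n := fun hP =>
      hn ⟨hP.1, fun d hd => (Finset.mem_sdiff.1 (hP.2 d hd)).2⟩
    rw [if_neg hn, if_neg hP]
    simp

end KAux


theorem kempner_maximal_excluded_set (b : ℕ) (hb : 2 ≤ b) (E : Finset ℕ)
    (hEsub : ∀ d ∈ E, d < b) (p : ℕ) (hcard : E.card = p) (hp : 1 ≤ p) (hpb : p < b) :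
    kempnerSum b E ≤ kempnerSum b (insert 0 (Finset.Ico (b - p + 1) b)) ∧
    (kempnerSum b E = kempnerSum b (insert 0 (Finset.Ico (b - p + 1) b)) ↔
      E = insert 0 (Finset.Ico (b - p + 1) b)) := by
  set a := b - p with hadef
  have hEsub' : E ⊆ Finset.range b := fun d hd => Finset.mem_range.2 (hEsub d hd)
  set A := Finset.range b \ E with hA
  have hAsub : A ⊆ Finset.range b := Finset.sdiff_subset
  have hAcard : A.card = a := by
    rw [hA, Finset.card_sdiff_of_subset hEsub', Finset.card_range, hcard]
  have ha1 : 1 ≤ a := by omega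
  have hab : a < b := by omega
  have hsd : Finset.range b \ (insert 0 (Finset.Ico (b - p + 1) b)) = Finset.Icc 1 a := by
    ext d
    simp only [Finset.mem_sdiff, Finset.mem_range, Finset.mem_insert, Finset.mem_Ico,
      Finset.mem_Icc]
    omega
  have hsd2 : Finset.range b \ Finset.Icc 1 a = insert 0 (Finset.Ico (b - p + 1) b) := by
    ext d
    simp only [Finset.mem_sdiff, Finset.mem_range, Finset.mem_insert, Finset.mem_Ico,
      Finset.mem_Icc]
    omega
  have hK1 : kempnerSum b E = (KAux.kap b A).toReal := KAux.kempner_eq_toReal hb E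
  have hK2 : kempnerSum b (insert 0 (Finset.Ico (b - p + 1) b))
      = (KAux.kap b (Finset.Icc 1 a)).toReal := by
    rw [KAux.kempner_eq_toReal hb, hsd]
  have hfinstar := KAux.kapstar_ne_top hb ha1 hab
  have hle := KAux.kap_le hb A hAsub hAcard ha1 hab
  have hfinA : KAux.kap b A ≠ ⊤ := ne_top_of_le_ne_top hfinstar hle
  refine ⟨?_, ?_, ?_⟩
  · rw [hK1, hK2]
    exact (ENNReal.toReal_le_toReal hfinA hfinstar).2 hle
  · intro heq
    by_contra hneE
    have hneA : A ≠ Finset.Icc 1 a := by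
      intro h
      apply hneE
      have hE : E = Finset.range b \ A := (Finset.sdiff_sdiff_eq_self hEsub').symm
      rw [hE, h, hsd2]
    have hlt := KAux.kap_lt hb A hAsub hAcard ha1 hab hneA
    rw [hK1, hK2] at heq
    exact absurd heq (ne_of_lt ((ENNReal.toReal_lt_toReal hfinA hfinstar).2 hlt))
  · intro h
    rw [h]
end
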